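/- arXiv:1401.3915 — 4 statements merged into one kernel-verified Lean document; each statement's English description precedes it below -/
import Mathlib

section
/- The total variation distance between a binomial distribution Bin(n, p) and the Poisson distribution with the same mean np is at most p. -/
open scoped BigOperators

/-- Probability mass function of the binomial distribution `Bin(n, p)` on `ℕ`. -/
noncomputable def binomialPMFReal (n : ℕ) (p : ℝ) (k : ℕ) : ℝ :=
  if k ≤ n then (n.choose k : ℝ) * p ^ k * (1 - p) ^ (n - k) else 0

/-- Probability mass function of the Poisson distribution with mean `r` on `ℕ`. -/
noncomputable def poissonPMFReal' (r : ℝ) (k : ℕ) : ℝ :=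
  Real.exp (-r) * r ^ k / (Nat.factorial k)


open Finset

namespace TVAux

noncomputable section
open Classical

def S (l : ℝ) (j : ℕ) : ℝ := ∑ m ∈ range j, l ^ m / (Nat.factorial m)

def T (l : ℝ) (j : ℕ) : ℝ := Real.exp l - S l j

def pois (l : ℝ) (k : ℕ) : ℝ := Real.exp (-l) * l ^ k / (Nat.factorial k)

theorem summable_exp_series (l : ℝ) : Summable (fun m : ℕ => l ^ m / (Nat.factorial m)) :=
  Real.summable_pow_div_factorial l

theorem summable_exp_tail (l : ℝ) (j : ℕ) :
    Summable (fun m : ℕ => l ^ (m + j) / (Nat.factorial (m + j))) :=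
  (summable_nat_add_iff j).2 (summable_exp_series l)

theorem tsum_exp_series (l : ℝ) : ∑' m : ℕ, l ^ m / (Nat.factorial m) = Real.exp l := by
  rw [Real.exp_eq_exp_ℝ, NormedSpace.exp_eq_tsum_div]

theorem summable_pois (l : ℝ) : Summable (pois l) := by
  unfold pois
  simp only [mul_div_assoc]
  exact (summable_exp_series l).mul_left _

theorem tsum_pois (l : ℝ) : ∑' k, pois l k = 1 := by
  unfold pois
  simp only [mul_div_assoc]
  rw [tsum_mul_left, tsum_exp_series, ← Real.exp_add]
  simp

theorem pois_nonneg {l : ℝ} (hl : 0 ≤ l) (k : ℕ) : 0 ≤ pois l k :=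
  div_nonneg (mul_nonneg (Real.exp_pos _).le (pow_nonneg hl k)) (Nat.cast_nonneg _)

theorem pois_pos {l : ℝ} (hl : 0 < l) (k : ℕ) : 0 < pois l k :=
  div_pos (mul_pos (Real.exp_pos _) (pow_pos hl k)) (by positivity)

theorem T_eq (l : ℝ) (j : ℕ) : T l j = ∑' m : ℕ, l ^ (m + j) / (Nat.factorial (m + j)) := by
  have h := Summable.sum_add_tsum_nat_add (f := fun m : ℕ => l ^ m / (Nat.factorial m)) j
    (summable_exp_series l)
  rw [tsum_exp_series] at h
  unfold T S
  linarith

theorem T_pos {l : ℝ} (hl : 0 < l) (j : ℕ) : 0 < T l j := by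
  rw [T_eq]
  refine Summable.tsum_pos (summable_exp_tail l j) (fun i => by positivity) 0 (by positivity)

theorem T_nonneg {l : ℝ} (hl : 0 < l) (j : ℕ) : 0 ≤ T l j := (T_pos hl j).le

theorem S_nonneg {l : ℝ} (hl : 0 ≤ l) (j : ℕ) : 0 ≤ S l j := by
  apply Finset.sum_nonneg; intro i _; positivity

theorem S_succ (l : ℝ) (j : ℕ) : S l (j + 1) = S l j + l ^ j / (Nat.factorial j) :=
  Finset.sum_range_succ _ j

theorem S_T (l : ℝ) (j : ℕ) : S l j + T l j = Real.exp l := by unfold T; ring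

theorem key_S {l : ℝ} (hl : 0 ≤ l) {j : ℕ} (hj : 1 ≤ j) : l * S l j ≤ (j : ℝ) * S l (j + 1) := by
  unfold S
  rw [Finset.mul_sum, Finset.mul_sum]
  have h1 : ∀ m ∈ range j, l * (l ^ m / (Nat.factorial m))
      = ((m:ℝ) + 1) * (l ^ (m+1) / (Nat.factorial (m+1))) := by
    intro m _
    rw [Nat.factorial_succ]
    push_cast
    have h2 : (Nat.factorial m : ℝ) ≠ 0 := by positivity
    field_simp
    ring
  rw [Finset.sum_congr rfl h1]
  have h3 : ∑ m ∈ range j, ((m:ℝ) + 1) * (l ^ (m+1) / (Nat.factorial (m+1)))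
      = ∑ i ∈ range (j+1), (i:ℝ) * (l ^ i / (Nat.factorial i)) := by
    rw [Finset.sum_range_succ' (fun i => (i:ℝ) * (l ^ i / (Nat.factorial i))) j]
    push_cast
    simp
  rw [h3]
  apply Finset.sum_le_sum
  intro m hm
  have hmj : (m : ℝ) ≤ (j : ℝ) := by
    have := Finset.mem_range.mp hm; exact_mod_cast Nat.lt_succ_iff.mp this
  have hnn : (0:ℝ) ≤ l ^ m / (Nat.factorial m) := by positivity
  nlinarith

theorem key_T {l : ℝ} (hl : 0 ≤ l) (j : ℕ) : (j : ℝ) * T l (j + 1) ≤ l * T l j := by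
  rw [T_eq, T_eq, ← tsum_mul_left, ← tsum_mul_left]
  apply Summable.tsum_le_tsum _ ((summable_exp_tail l (j+1)).mul_left _)
    ((summable_exp_tail l j).mul_left _)
  intro m
  have h1 : m + (j + 1) = (m + j) + 1 := by omega
  rw [h1, Nat.factorial_succ, pow_succ]
  have hd : (0:ℝ) < (Nat.factorial (m + j) : ℝ) := by positivity
  have hd2 : (0:ℝ) < ((m:ℝ) + (j:ℝ) + 1) := by positivity
  have hc : (0:ℝ) ≤ l ^ (m + j) / (Nat.factorial (m + j)) := by positivity
  push_cast
  calc (j:ℝ) * (l ^ (m+j) * l / (((m:ℝ)+(j:ℝ)+1) * (Nat.factorial (m+j))))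
      = ((j:ℝ)/((m:ℝ)+(j:ℝ)+1)) * (l * (l ^ (m+j) / (Nat.factorial (m+j)))) := by
        field_simp
        try exact Or.inl trivial
    _ ≤ 1 * (l * (l ^ (m+j) / (Nat.factorial (m+j)))) := by
        apply mul_le_mul_of_nonneg_right
        · rw [div_le_one hd2]; linarith
        · positivity
    _ = l * (l ^ (m+j) / (Nat.factorial (m+j))) := one_mul _


def hind (A : Set ℕ) (k : ℕ) : ℝ := if k ∈ A then 1 else 0

def c (l : ℝ) (A : Set ℕ) : ℝ := ∑' k, hind A k * pois l k

def F (l : ℝ) (i : ℕ) : ℕ → ℝ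
  | 0 => 0
  | (j+1) => (Nat.factorial j) / l ^ (j+1) *
      ((if i ≤ j then l ^ i / (Nat.factorial i) else 0) - pois l i * S l (j+1))

def D (l : ℝ) (i j : ℕ) : ℝ := F l i (j+1) - F l i j

def f (l : ℝ) (A : Set ℕ) : ℕ → ℝ
  | 0 => 0
  | (j+1) => (Nat.factorial j) / l ^ (j+1) *
      ∑ m ∈ range (j+1), (l ^ m / (Nat.factorial m)) * (hind A m - c l A)

theorem hind_nonneg (A : Set ℕ) (k : ℕ) : 0 ≤ hind A k := by
  unfold hind; split <;> norm_num

theorem hind_le_one (A : Set ℕ) (k : ℕ) : hind A k ≤ 1 := by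
  unfold hind; split <;> norm_num

theorem summable_h_pois {l : ℝ} (hl : 0 ≤ l) (A : Set ℕ) :
    Summable (fun k => hind A k * pois l k) := by
  apply Summable.of_nonneg_of_le (fun k => mul_nonneg (hind_nonneg A k) (pois_nonneg hl k))
    (fun k => _) (summable_pois l)
  intro k
  calc hind A k * pois l k ≤ 1 * pois l k :=
        mul_le_mul_of_nonneg_right (hind_le_one A k) (pois_nonneg hl k)
    _ = pois l k := one_mul _

theorem expl_pois (l : ℝ) (i : ℕ) :
    l ^ i / (Nat.factorial i) = Real.exp l * pois l i := by
  unfold pois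
  rw [Real.exp_neg]
  field_simp

theorem F_le (l : ℝ) {i j : ℕ} (hij : i ≤ j) :
    F l i (j+1) = (Nat.factorial j) / l ^ (j+1) * (pois l i * T l (j+1)) := by
  show (Nat.factorial j) / l ^ (j+1) *
      ((if i ≤ j then l ^ i / (Nat.factorial i) else 0) - pois l i * S l (j+1)) = _
  rw [if_pos hij, expl_pois]
  unfold T
  ring

theorem F_gt (l : ℝ) {i j : ℕ} (hij : j < i) :
    F l i (j+1) = -((Nat.factorial j) / l ^ (j+1) * (pois l i * S l (j+1))) := by
  show (Nat.factorial j) / l ^ (j+1) *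
      ((if i ≤ j then l ^ i / (Nat.factorial i) else 0) - pois l i * S l (j+1)) = _
  rw [if_neg (by omega)]
  ring

theorem D_nonpos_of_lt {l : ℝ} (hl : 0 < l) {i j : ℕ} (hij : i < j) : D l i j ≤ 0 := by
  obtain ⟨t, rfl⟩ : ∃ t, j = t + 1 := ⟨j - 1, by omega⟩
  unfold D
  rw [F_le l (by omega : i ≤ t), F_le l (by omega : i ≤ t + 1)]
  have hkey := key_T hl.le (t + 1)
  have hpi := pois_nonneg hl.le i
  have hfac : (0:ℝ) < (Nat.factorial t : ℝ) := by positivity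
  have hpow : (0:ℝ) < l ^ (t+1) := by positivity
  have hpow2 : (0:ℝ) < l ^ (t+2) := by positivity
  have hT1 := T_pos hl (t+1)
  have hT2 := T_pos hl (t+2)
  have hfacs : (Nat.factorial (t+1) : ℝ) = ((t:ℝ)+1) * (Nat.factorial t) := by
    rw [Nat.factorial_succ]; push_cast; ring
  have hpows : l ^ (t+2) = l ^ (t+1) * l := by ring
  rw [hfacs, hpows]
  have h1 : ((t:ℝ)+1) * (Nat.factorial t) / (l^(t+1) * l) * (pois l i * T l (t+2))
      ≤ (Nat.factorial t) / l^(t+1) * (pois l i * T l (t+1)) := by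
    rw [div_mul_eq_mul_div, div_mul_eq_mul_div, div_le_div_iff₀ (by positivity) (by positivity)]
    push_cast at hkey ⊢
    nlinarith [mul_le_mul_of_nonneg_left hkey (mul_nonneg hpi (mul_nonneg hfac.le hpow.le))]
  linarith

theorem D_nonpos_of_gt {l : ℝ} (hl : 0 < l) {i j : ℕ} (hj : 1 ≤ j) (hij : j < i) :
    D l i j ≤ 0 := by
  obtain ⟨t, rfl⟩ : ∃ t, j = t + 1 := ⟨j - 1, by omega⟩
  unfold D
  rw [F_gt l (by omega : t < i), F_gt l (by omega : t + 1 < i)]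
  have hkey : l * S l (t+1) ≤ ((t:ℝ)+1) * S l (t+2) := by
    have := key_S hl.le (by omega : 1 ≤ t+1); push_cast at this ⊢
    convert this using 2 <;> push_cast <;> ring
  have hpi := pois_nonneg hl.le i
  have hfac : (0:ℝ) < (Nat.factorial t : ℝ) := by positivity
  have hpow2 : (0:ℝ) < l ^ (t+2) := by positivity
  have hfacs : (Nat.factorial (t+1) : ℝ) = ((t:ℝ)+1) * (Nat.factorial t) := by
    rw [Nat.factorial_succ]; push_cast; ring
  have h1 : (Nat.factorial t : ℝ)/l^(t+1) * (pois l i * S l (t+1))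
      = pois l i * ((Nat.factorial t : ℝ)/l^(t+2)) * (l * S l (t+1)) := by
    field_simp; ring
  have h2 : (Nat.factorial (t+1) : ℝ)/l^(t+2) * (pois l i * S l (t+2))
      = pois l i * ((Nat.factorial t : ℝ)/l^(t+2)) * (((t:ℝ)+1) * S l (t+2)) := by
    rw [hfacs]; field_simp
  have h3 := mul_le_mul_of_nonneg_left hkey
    (mul_nonneg hpi (by positivity : (0:ℝ) ≤ (Nat.factorial t : ℝ)/l^(t+2)))
  have h4 : t + 1 + 1 = t + 2 := by omega
  rw [h4] at *
  linarith [h1, h2, h3]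

theorem D_diag_nonneg {l : ℝ} (hl : 0 < l) {j : ℕ} (hj : 1 ≤ j) : 0 ≤ D l j j := by
  obtain ⟨t, rfl⟩ : ∃ t, j = t + 1 := ⟨j - 1, by omega⟩
  unfold D
  rw [F_le l (le_refl (t+1)), F_gt l (by omega : t < t + 1)]
  have hpi := pois_nonneg hl.le (t+1)
  have hT := T_pos hl (t+2)
  have hS := S_nonneg hl.le (t+1)
  have hfac : (0:ℝ) < (Nat.factorial t : ℝ) := by positivity
  have hfac2 : (0:ℝ) < (Nat.factorial (t+1) : ℝ) := by positivity
  have hpow : (0:ℝ) < l ^ (t+1) := by positivity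
  have hpow2 : (0:ℝ) < l ^ (t+2) := by positivity
  have h1 : 0 ≤ (Nat.factorial (t+1) : ℝ) / l ^ (t+2) * (pois l (t+1) * T l (t+2)) := by positivity
  have h2 : 0 ≤ (Nat.factorial t : ℝ) / l ^ (t+1) * (pois l (t+1) * S l (t+1)) := by positivity
  linarith

theorem D_diag_le {l : ℝ} (hl : 0 < l) {j : ℕ} (hj : 1 ≤ j) : D l j j ≤ 1 / l := by
  obtain ⟨t, rfl⟩ : ∃ t, j = t + 1 := ⟨j - 1, by omega⟩
  unfold D
  rw [F_le l (le_refl (t+1)), F_gt l (by omega : t < t + 1)]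
  rw [sub_neg_eq_add]
  have hkey : l * S l (t+1) ≤ ((t:ℝ)+1) * S l (t+2) := by
    have := key_S hl.le (by omega : 1 ≤ t+1); push_cast at this ⊢; convert this using 2 <;> push_cast <;> ring
  -- goal: (t+1)!/l^(t+2) * (pois (t+1) * T (t+2)) + t!/l^(t+1) * (pois (t+1) * S (t+1)) ≤ 1/l
  have hpi : pois l (t+1) = Real.exp (-l) * l^(t+1) / (Nat.factorial (t+1)) := rfl
  have hfacs : (Nat.factorial (t+1) : ℝ) = ((t:ℝ)+1) * (Nat.factorial t) := by
    rw [Nat.factorial_succ]; push_cast; ring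
  have hfac : (0:ℝ) < (Nat.factorial t : ℝ) := by positivity
  have hfac2 : (0:ℝ) < (Nat.factorial (t+1) : ℝ) := by positivity
  have hpow : (0:ℝ) < l ^ (t+1) := by positivity
  have hpow2 : (0:ℝ) < l ^ (t+2) := by positivity
  have hexp : (0:ℝ) < Real.exp (-l) := Real.exp_pos _
  have hST := S_T l (t+2)
  have hepos : Real.exp (-l) * Real.exp l = 1 := by rw [← Real.exp_add]; simp
  -- reduce to: exp(-l) * (T(t+2) + (l/(t+1)) S(t+1) ... ) ≤ ...
  have e1 : (Nat.factorial (t+1) : ℝ) / l ^ (t+2) * (pois l (t+1) * T l (t+2))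
      = Real.exp (-l) / l * T l (t+2) := by
    rw [hpi]; field_simp; ring
  have e2 : (Nat.factorial t : ℝ) / l ^ (t+1) * (pois l (t+1) * S l (t+1))
      = Real.exp (-l) / (((t:ℝ)+1) * l) * (l * S l (t+1)) := by
    rw [hpi, hfacs]; field_simp
  rw [e1, e2]
  have e3 : Real.exp (-l) / (((t:ℝ)+1) * l) * (l * S l (t+1))
      ≤ Real.exp (-l) / (((t:ℝ)+1) * l) * (((t:ℝ)+1) * S l (t+2)) := by
    apply mul_le_mul_of_nonneg_left hkey (by positivity)
  have e4 : Real.exp (-l) / (((t:ℝ)+1) * l) * (((t:ℝ)+1) * S l (t+2))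
      = Real.exp (-l) / l * S l (t+2) := by
    field_simp
  have e5 : Real.exp (-l) / l * T l (t+2) + Real.exp (-l) / l * S l (t+2) = 1 / l := by
    rw [← mul_add]
    rw [add_comm (T l (t+2))]
    rw [hST]
    rw [div_mul_eq_mul_div, hepos]
  linarith

theorem summable_F (l : ℝ) (j : ℕ) : Summable (fun i => F l i j) := by
  cases j with
  | zero => simpa [F] using summable_zero
  | succ j =>
    have heq : (fun i => F l i (j+1)) = fun i =>
        ((Nat.factorial j) / l ^ (j+1)) * (if i ≤ j then l ^ i / (Nat.factorial i) else 0)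
        - ((Nat.factorial j) / l ^ (j+1) * S l (j+1)) * pois l i := by
      funext i
      show (Nat.factorial j) / l ^ (j+1) *
        ((if i ≤ j then l ^ i / (Nat.factorial i) else 0) - pois l i * S l (j+1)) = _
      ring
    rw [heq]
    apply Summable.sub
    · apply (summable_of_ne_finset_zero (s := range (j+1)))
      intro i hi
      rw [if_neg (by simp at hi; omega)]
      ring
    · exact (summable_pois l).mul_left _

theorem summable_wF (l : ℝ) (w : ℕ → ℝ) (hw : ∀ i, |w i| ≤ 1) (j : ℕ) :
    Summable (fun i => w i * F l i j) := by
  rw [← summable_abs_iff]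
  apply Summable.of_nonneg_of_le (fun i => abs_nonneg _) (fun i => ?_) (summable_F l j).abs
  rw [abs_mul]
  calc |w i| * |F l i j| ≤ 1 * |F l i j| :=
        mul_le_mul_of_nonneg_right (hw i) (abs_nonneg _)
    _ = |F l i j| := one_mul _

theorem summable_wD (l : ℝ) (w : ℕ → ℝ) (hw : ∀ i, |w i| ≤ 1) (j : ℕ) :
    Summable (fun i => w i * D l i j) := by
  have heq : (fun i => w i * D l i j) = fun i => w i * F l i (j+1) - w i * F l i j := by
    funext i; unfold D; ring
  rw [heq]
  exact (summable_wF l w hw (j+1)).sub (summable_wF l w hw j)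

theorem tsum_wF (l : ℝ) (hl : 0 < l) (w : ℕ → ℝ) (hw : ∀ i, |w i| ≤ 1) (j : ℕ) :
    ∑' i, w i * F l i (j+1) = (Nat.factorial j) / l ^ (j+1) *
      ((∑ m ∈ range (j+1), w m * (l ^ m / (Nat.factorial m)))
        - (∑' i, w i * pois l i) * S l (j+1)) := by
  have hwp : Summable (fun i => w i * pois l i) := by
    rw [← summable_abs_iff]
    apply Summable.of_nonneg_of_le (fun i => abs_nonneg _) (fun i => ?_)
      ((summable_pois l).abs)
    rw [abs_mul]
    calc |w i| * |pois l i| ≤ 1 * |pois l i| :=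
          mul_le_mul_of_nonneg_right (hw i) (abs_nonneg _)
      _ = |pois l i| := one_mul _
  have heq : (fun i => w i * F l i (j+1)) = fun i =>
      ((Nat.factorial j) / l ^ (j+1)) * (w i * (if i ≤ j then l ^ i / (Nat.factorial i) else 0))
      - ((Nat.factorial j) / l ^ (j+1) * S l (j+1)) * (w i * pois l i) := by
    funext i
    show w i * ((Nat.factorial j) / l ^ (j+1) *
      ((if i ≤ j then l ^ i / (Nat.factorial i) else 0) - pois l i * S l (j+1))) = _
    ring
  have hsum1 : Summable (fun i => w i * (if i ≤ j then l ^ i / (Nat.factorial i) else 0)) := by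
    apply (summable_of_ne_finset_zero (s := range (j+1)))
    intro i hi
    rw [if_neg (by simp at hi; omega)]
    ring
  rw [heq, Summable.tsum_sub ((hsum1.mul_left _)) ((hwp.mul_left _)), tsum_mul_left, tsum_mul_left]
  have h2 : ∑' i, w i * (if i ≤ j then l ^ i / (Nat.factorial i) else 0)
      = ∑ m ∈ range (j+1), w m * (l ^ m / (Nat.factorial m)) := by
    rw [tsum_eq_sum (s := range (j+1)) (fun i hi => by rw [if_neg (by simp at hi; omega)]; ring)]
    apply Finset.sum_congr rfl
    intro m hm
    rw [if_pos (by simp at hm; omega)]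
  rw [h2]
  ring

theorem hind_abs_le (A : Set ℕ) (i : ℕ) : |hind A i| ≤ 1 := by
  rw [abs_of_nonneg (hind_nonneg A i)]; exact hind_le_one A i

theorem f_eq_tsum (l : ℝ) (hl : 0 < l) (A : Set ℕ) (j : ℕ) :
    f l A j = ∑' i, hind A i * F l i j := by
  cases j with
  | zero => simp [f, F]
  | succ j =>
    rw [tsum_wF l hl _ (hind_abs_le A) j]
    show (Nat.factorial j) / l ^ (j+1) *
      (∑ m ∈ range (j+1), (l ^ m / (Nat.factorial m)) * (hind A m - c l A)) = _
    have : c l A = ∑' i, hind A i * pois l i := rfl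
    rw [← this]
    congr 1
    unfold S
    rw [Finset.mul_sum, ← Finset.sum_sub_distrib]
    apply Finset.sum_congr rfl
    intro m _
    ring

theorem tsum_F_eq_zero (l : ℝ) (hl : 0 < l) (j : ℕ) : ∑' i, F l i j = 0 := by
  cases j with
  | zero => simp [F]
  | succ j =>
    have h1 : ∑' i, F l i (j+1) = ∑' i, (1 : ℝ) * F l i (j+1) := by
      apply tsum_congr; intro i; rw [one_mul]
    rw [h1, tsum_wF l hl _ (fun i => by norm_num) j]
    have h2 : ∑' i, (1:ℝ) * pois l i = 1 := by
      rw [tsum_congr (fun i => one_mul (pois l i)), tsum_pois]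
    rw [h2]
    have h3 : ∑ m ∈ range (j+1), (1:ℝ) * (l ^ m / (Nat.factorial m)) = S l (j+1) := by
      unfold S
      apply Finset.sum_congr rfl
      intro m _; rw [one_mul]
    rw [h3]
    ring

theorem tsum_D_eq_zero (l : ℝ) (hl : 0 < l) (j : ℕ) : ∑' i, D l i j = 0 := by
  have heq : (fun i => D l i j) = fun i => F l i (j+1) - F l i j := rfl
  rw [heq, Summable.tsum_sub (summable_F l (j+1)) (summable_F l j), tsum_F_eq_zero l hl,
    tsum_F_eq_zero l hl, sub_zero]

theorem delta_f (l : ℝ) (hl : 0 < l) (A : Set ℕ) (j : ℕ) :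
    f l A (j+1) - f l A j = ∑' i, hind A i * D l i j := by
  rw [f_eq_tsum l hl A (j+1), f_eq_tsum l hl A j]
  rw [← Summable.tsum_sub (summable_wF l _ (hind_abs_le A) (j+1)) (summable_wF l _ (hind_abs_le A) j)]
  apply tsum_congr
  intro i
  unfold D
  ring

theorem abs_delta_f {l : ℝ} (hl : 0 < l) (A : Set ℕ) {j : ℕ} (hj : 1 ≤ j) :
    |f l A (j+1) - f l A j| ≤ 1 / l := by
  rw [delta_f l hl A j]
  have hsum : Summable (fun i => hind A i * D l i j) := summable_wD l _ (hind_abs_le A) j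
  have hsumD : Summable (fun i => D l i j) := by
    have h1 : ∀ i : ℕ, |(1:ℝ)| ≤ 1 := fun i => by norm_num
    have := summable_wD l (fun _ => (1:ℝ)) h1 j
    simpa using this
  have hDd1 := D_diag_nonneg hl hj
  have hDd2 := D_diag_le hl hj
  rw [abs_le]
  constructor
  · -- lower bound
    have hle : ∀ i, (if i = j then 0 else D l i j) ≤ hind A i * D l i j := by
      intro i
      by_cases hij : i = j
      · rw [if_pos hij, hij]
        exact mul_nonneg (hind_nonneg A j) hDd1
      · rw [if_neg hij]
        have hD : D l i j ≤ 0 := by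
          rcases lt_or_gt_of_ne hij with h | h
          · exact D_nonpos_of_lt hl h
          · exact D_nonpos_of_gt hl hj h
        nlinarith [hind_le_one A i, hind_nonneg A i]
    have hsumite : Summable (fun i => if i = j then 0 else D l i j) :=
      (hasSum_ite_sub_hasSum hsumD.hasSum j).summable
    have h2 : ∑' i, (if i = j then 0 else D l i j) ≤ ∑' i, hind A i * D l i j :=
      Summable.tsum_le_tsum hle hsumite hsum
    have h3 : ∑' i, (if i = j then (0:ℝ) else D l i j) = - D l j j := by
      have := Summable.tsum_eq_add_tsum_ite hsumD j
      rw [tsum_D_eq_zero l hl j] at this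
      linarith
    linarith
  · -- upper bound
    rw [Summable.tsum_eq_add_tsum_ite hsum j]
    have h1 : hind A j * D l j j ≤ D l j j := by
      nlinarith [hind_le_one A j, hind_nonneg A j]
    have h2 : ∑' i, (if i = j then 0 else hind A i * D l i j) ≤ 0 := by
      apply tsum_nonpos
      intro i
      by_cases hij : i = j
      · rw [if_pos hij]
      · rw [if_neg hij]
        have hD : D l i j ≤ 0 := by
          rcases lt_or_gt_of_ne hij with h | h
          · exact D_nonpos_of_lt hl h
          · exact D_nonpos_of_gt hl hj h
        exact mul_nonpos_of_nonneg_of_nonpos (hind_nonneg A i) hD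
    linarith

theorem stein_eq (l : ℝ) (hl : 0 < l) (A : Set ℕ) (k : ℕ) :
    l * f l A (k+1) - (k : ℝ) * f l A k = hind A k - c l A := by
  have hlne : l ≠ 0 := hl.ne'
  cases k with
  | zero =>
    simp only [f]
    push_cast
    rw [Finset.sum_range_one]
    simp
    field_simp
  | succ j =>
    simp only [f]
    push_cast
    rw [Finset.sum_range_succ]
    have hfacs : (Nat.factorial (j+1) : ℝ) = ((j:ℝ)+1) * (Nat.factorial j) := by
      rw [Nat.factorial_succ]; push_cast; ring
    rw [hfacs]
    have hfj : (Nat.factorial j : ℝ) ≠ 0 := by positivity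
    have hfj1 : (Nat.factorial (j+1) : ℝ) ≠ 0 := by positivity
    have hp1 : l ^ (j+1) ≠ 0 := pow_ne_zero _ hlne
    have hp2 : l ^ (j+2) ≠ 0 := pow_ne_zero _ hlne
    have hps : l ^ (j+2) = l ^ (j+1) * l := by ring
    rw [hfacs] at hfj1
    field_simp
    ring

/-- binomial weights -/
def B (n : ℕ) (p : ℝ) (k : ℕ) : ℝ := (n.choose k : ℝ) * p ^ k * (1 - p) ^ (n - k)

theorem sum_B (n : ℕ) (p : ℝ) : ∑ k ∈ range (n+1), B n p k = 1 := by
  calc ∑ k ∈ range (n+1), B n p k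
      = ∑ k ∈ range (n+1), p ^ k * (1-p) ^ (n-k) * (n.choose k : ℝ) := by
        apply Finset.sum_congr rfl; intro k _; unfold B; ring
    _ = (p + (1 - p)) ^ n := (add_pow (R := ℝ) p (1 - p) n).symm
    _ = 1 := by norm_num

theorem binom_id1 (n : ℕ) (p : ℝ) (g : ℕ → ℝ) :
    ∑ k ∈ range (n+2), B (n+1) p k * ((k:ℝ) * g k)
      = ((n:ℝ)+1) * p * ∑ v ∈ range (n+1), B n p v * g (v+1) := by
  rw [Finset.sum_range_succ' (fun k => B (n+1) p k * ((k:ℝ) * g k)) (n+1)]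
  simp only [Nat.cast_zero, zero_mul, mul_zero, add_zero]
  rw [Finset.mul_sum]
  apply Finset.sum_congr rfl
  intro v hv
  have hv' : v < n + 1 := Finset.mem_range.mp hv
  unfold B
  have hch : ((n+1).choose (v+1) : ℝ) * ((v:ℝ)+1) = ((n:ℝ)+1) * (n.choose v : ℝ) := by
    have := Nat.add_one_mul_choose_eq n v
    have h2 : ((n+1) * n.choose v : ℕ) = ((n+1).choose (v+1) * (v+1) : ℕ) := this
    exact_mod_cast congrArg (Nat.cast (R := ℝ)) h2.symm
  have hsub : n + 1 - (v + 1) = n - v := by omega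
  rw [hsub]
  push_cast
  push_cast at hch
  linear_combination (p ^ (v+1) * (1-p) ^ (n-v) * g (v+1)) * hch

theorem binom_id2 (n : ℕ) (p : ℝ) (g : ℕ → ℝ) :
    ∑ k ∈ range (n+2), B (n+1) p k * g (k+1)
      = ∑ v ∈ range (n+1), B n p v * ((1-p) * g (v+1) + p * g (v+2)) := by
  rw [Finset.sum_range_succ' (fun k => B (n+1) p k * g (k+1)) (n+1)]
  have hpascal : ∀ v, B (n+1) p (v+1)
      = (n.choose v : ℝ) * p^(v+1) * (1-p)^(n-v) + (n.choose (v+1) : ℝ) * p^(v+1) * (1-p)^(n+1-(v+1)) := by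
    intro v
    unfold B
    rw [Nat.choose_succ_succ' n v]
    push_cast
    ring_nf
    try ring
  have hsplit : ∑ v ∈ range (n+1), B (n+1) p (v+1) * g (v+2)
      = (∑ v ∈ range (n+1), (n.choose v : ℝ) * p^(v+1) * (1-p)^(n-v) * g (v+2))
        + ∑ v ∈ range (n+1), (n.choose (v+1) : ℝ) * p^(v+1) * (1-p)^(n-v) * g (v+2) := by
    rw [← Finset.sum_add_distrib]
    apply Finset.sum_congr rfl
    intro v hv
    rw [hpascal v]
    have hsub : n + 1 - (v + 1) = n - v := by omega
    rw [hsub]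
    ring
  rw [hsplit]
  -- RHS split
  have hrhs : ∑ v ∈ range (n+1), B n p v * ((1-p) * g (v+1) + p * g (v+2))
      = (∑ v ∈ range (n+1), (1-p) * B n p v * g (v+1))
        + ∑ v ∈ range (n+1), (n.choose v : ℝ) * p^(v+1) * (1-p)^(n-v) * g (v+2) := by
    rw [← Finset.sum_add_distrib]
    apply Finset.sum_congr rfl
    intro v _
    unfold B
    ring
  rw [hrhs]
  have hB0 : B (n+1) p 0 * g 1 = (1-p)^(n+1) * g 1 := by
    unfold B; simp
  rw [hB0]
  -- remains: ∑_{v∈range(n+1)} choose n (v+1) p^(v+1) q^(n-v) g(v+2) + q^(n+1) g 1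
  --        = ∑ (1-p) * B n p v * g (v+1)
  have hlast : ∑ v ∈ range (n+1), (n.choose (v+1) : ℝ) * p^(v+1) * (1-p)^(n-v) * g (v+2)
      = ∑ v ∈ range n, (n.choose (v+1) : ℝ) * p^(v+1) * (1-p)^(n-v) * g (v+2) := by
    rw [Finset.sum_range_succ]
    rw [Nat.choose_eq_zero_of_lt (by omega : n < n + 1)]
    simp
  rw [hlast]
  have hq : ∑ v ∈ range (n+1), (1-p) * B n p v * g (v+1)
      = (∑ w ∈ range n, (1-p) * B n p (w+1) * g (w+2)) + (1-p) * B n p 0 * g 1 := by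
    rw [Finset.sum_range_succ' (fun v => (1-p) * B n p v * g (v+1)) n]
  rw [hq]
  have hB0' : (1-p) * B n p 0 * g 1 = (1-p)^(n+1) * g 1 := by
    unfold B
    rw [Nat.choose_zero_right, Nat.sub_zero, pow_succ]
    push_cast
    ring
  rw [hB0']
  have hterm : ∀ w ∈ range n, (n.choose (w+1) : ℝ) * p^(w+1) * (1-p)^(n-w) * g (w+2)
      = (1-p) * B n p (w+1) * g (w+2) := by
    intro w hw
    have hw' : w < n := Finset.mem_range.mp hw
    unfold B
    have hsub : n - w = (n - (w+1)) + 1 := by omega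
    rw [hsub, pow_succ]
    ring
  rw [Finset.sum_congr rfl hterm]
  ring

theorem B_nonneg {p : ℝ} (hp0 : 0 ≤ p) (hp1 : p ≤ 1) (n k : ℕ) : 0 ≤ B n p k := by
  unfold B
  have h1 : (0:ℝ) ≤ 1 - p := by linarith
  positivity

end
end TVAux

noncomputable def binomialPMFReal' (n : ℕ) (p : ℝ) (k : ℕ) : ℝ :=
  if k ≤ n then (n.choose k : ℝ) * p ^ k * (1 - p) ^ (n - k) else 0

open TVAux Finset in
theorem tv_binomial_poisson_le' (n : ℕ) (hn : 0 < n) (p : ℝ) (hp0 : 0 ≤ p) (hp1 : p ≤ 1)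
    (A : Set ℕ) :
    |(∑' k : ℕ, Set.indicator A (binomialPMFReal' n p) k) -
      (∑' k : ℕ, Set.indicator A (TVAux.pois ((n : ℝ) * p)) k)| ≤ p := by
  classical
  rcases eq_or_lt_of_le hp0 with hp | hp
  · -- p = 0
    subst hp
    have h0 : (n:ℝ) * 0 = 0 := mul_zero _
    rw [h0]
    have hfun : binomialPMFReal' n 0 = pois 0 := by
      funext k
      cases k with
      | zero =>
        have h1 : 0 ≤ n := Nat.zero_le n
        simp [binomialPMFReal', pois, h1]
      | succ j => simp [binomialPMFReal', pois]
    rw [hfun, sub_self, abs_zero]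
  · -- 0 < p
    obtain ⟨m, rfl⟩ : ∃ m, n = m + 1 := ⟨n - 1, by omega⟩
    set l : ℝ := ((m+1 : ℕ) : ℝ) * p with hldef
    have hl : 0 < l := by
      have h1 : (0:ℝ) < ((m+1 : ℕ) : ℝ) := by exact_mod_cast Nat.succ_pos m
      exact mul_pos h1 hp
    have hindic : ∀ (g : ℕ → ℝ) (k : ℕ), Set.indicator A g k = hind A k * g k := by
      intro g k
      by_cases h : k ∈ A <;> simp [h, hind]
    -- binomial side
    have hbin : (∑' k : ℕ, Set.indicator A (binomialPMFReal' (m+1) p) k)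
        = ∑ k ∈ range (m+2), hind A k * B (m+1) p k := by
      rw [tsum_congr (fun k => hindic (binomialPMFReal' (m+1) p) k)]
      rw [tsum_eq_sum (s := range (m+2))
        (fun k hk => by
          have hk' : ¬ (k ≤ m + 1) := by have := Finset.mem_range.not.mp hk; omega
          unfold binomialPMFReal'
          rw [if_neg hk', mul_zero])]
      apply Finset.sum_congr rfl
      intro k hk
      have hk' : k ≤ m + 1 := by have := Finset.mem_range.mp hk; omega
      unfold binomialPMFReal' B
      rw [if_pos hk']
    have hpoi : (∑' k : ℕ, Set.indicator A (pois l) k) = c l A := by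
      rw [tsum_congr (fun k => hindic (pois l) k)]
      rfl
    rw [hbin, hpoi]
    -- main chain
    have e1 : ∑ k ∈ range (m+2), B (m+1) p k * (hind A k - c l A)
        = (∑ k ∈ range (m+2), hind A k * B (m+1) p k) - c l A := by
      calc ∑ k ∈ range (m+2), B (m+1) p k * (hind A k - c l A)
          = ∑ k ∈ range (m+2), (hind A k * B (m+1) p k - c l A * B (m+1) p k) := by
            apply Finset.sum_congr rfl; intro k _; ring
        _ = (∑ k ∈ range (m+2), hind A k * B (m+1) p k)
            - ∑ k ∈ range (m+2), c l A * B (m+1) p k := Finset.sum_sub_distrib _ _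
        _ = (∑ k ∈ range (m+2), hind A k * B (m+1) p k)
            - c l A * ∑ k ∈ range (m+2), B (m+1) p k := by rw [← Finset.mul_sum]
        _ = (∑ k ∈ range (m+2), hind A k * B (m+1) p k) - c l A := by
            rw [sum_B (m+1) p, mul_one]
    have e2 : ∑ k ∈ range (m+2), B (m+1) p k * (hind A k - c l A)
        = ∑ k ∈ range (m+2), B (m+1) p k * (l * f l A (k+1) - (k:ℝ) * f l A k) := by
      apply Finset.sum_congr rfl
      intro k _
      rw [stein_eq l hl A k]
    have e3 : ∑ k ∈ range (m+2), B (m+1) p k * (l * f l A (k+1) - (k:ℝ) * f l A k)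
        = l * (∑ k ∈ range (m+2), B (m+1) p k * f l A (k+1))
          - ∑ k ∈ range (m+2), B (m+1) p k * ((k:ℝ) * f l A k) := by
      rw [Finset.mul_sum, ← Finset.sum_sub_distrib]
      apply Finset.sum_congr rfl
      intro k _
      ring
    have e4 : ∑ k ∈ range (m+2), B (m+1) p k * ((k:ℝ) * f l A k)
        = l * ∑ v ∈ range (m+1), B m p v * f l A (v+1) := by
      rw [binom_id1 m p (f l A), hldef]
      push_cast
      ring
    have e5 : ∑ k ∈ range (m+2), B (m+1) p k * f l A (k+1)
        = ∑ v ∈ range (m+1), B m p v * ((1-p) * f l A (v+1) + p * f l A (v+2)) :=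
      binom_id2 m p (f l A)
    have e6 : ∑ k ∈ range (m+2), B (m+1) p k * (hind A k - c l A)
        = l * p * ∑ v ∈ range (m+1), B m p v * (f l A (v+2) - f l A (v+1)) := by
      rw [e2, e3, e4, e5, ← mul_sub, ← Finset.sum_sub_distrib, Finset.mul_sum,
        Finset.mul_sum]
      apply Finset.sum_congr rfl
      intro v _
      ring
    rw [← e1, e6]
    -- final bound
    have hbd : |∑ v ∈ range (m+1), B m p v * (f l A (v+2) - f l A (v+1))| ≤ 1 / l := by
      calc |∑ v ∈ range (m+1), B m p v * (f l A (v+2) - f l A (v+1))|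
          ≤ ∑ v ∈ range (m+1), |B m p v * (f l A (v+2) - f l A (v+1))| :=
            Finset.abs_sum_le_sum_abs _ _
        _ ≤ ∑ v ∈ range (m+1), B m p v * (1 / l) := by
            apply Finset.sum_le_sum
            intro v _
            rw [abs_mul, abs_of_nonneg (B_nonneg hp0 hp1 m v)]
            apply mul_le_mul_of_nonneg_left _ (B_nonneg hp0 hp1 m v)
            exact abs_delta_f hl A (by omega : 1 ≤ v + 1)
        _ = 1 / l := by rw [← Finset.sum_mul, sum_B m p, one_mul]
    calc |l * p * ∑ v ∈ range (m+1), B m p v * (f l A (v+2) - f l A (v+1))|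
        = l * p * |∑ v ∈ range (m+1), B m p v * (f l A (v+2) - f l A (v+1))| := by
          rw [abs_mul, abs_of_nonneg (by positivity : (0:ℝ) ≤ l * p)]
      _ ≤ l * p * (1 / l) := by
          apply mul_le_mul_of_nonneg_left hbd (by positivity)
      _ = p := by field_simp

/-- The total variation distance between `Bin(n, p)` and the Poisson distribution
with the same mean `n * p` is at most `p`. -/
theorem tv_binomial_poisson_le (n : ℕ) (hn : 0 < n) (p : ℝ) (hp0 : 0 ≤ p) (hp1 : p ≤ 1)
    (A : Set ℕ) :
    |(∑' k : ℕ, Set.indicator A (binomialPMFReal n p) k) -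
      (∑' k : ℕ, Set.indicator A (poissonPMFReal' (n * p)) k)| ≤ p := by
  have e1 : binomialPMFReal n p = binomialPMFReal' n p := rfl
  have e2 : poissonPMFReal' ((n:ℝ) * p) = TVAux.pois ((n:ℝ) * p) := rfl
  rw [e1, e2]
  exact tv_binomial_poisson_le' n hn p hp0 hp1 A
end

section
/- Conditioning the multi-type Poisson branching process B_K on survival yields, in expectation over types, σ(K) = Σ_{a,b} K_{ab} (1 − (1 − ρ(K;a))(1 − ρ(K;b))) π_a π_b, where σ(K) = E[|B| · 1{B_K survives}] and B is the first generation of B_K started from a random type distributed according to π. -/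
open scoped BigOperators
open scoped Nat

lemma tsum_exp_div (x : ℝ) : ∑' n : ℕ, x ^ n / n ! = Real.exp x := by
  rw [Real.exp_eq_exp_ℝ, NormedSpace.exp_eq_tsum_div]

lemma summable_mul_exp_div (x : ℝ) :
    Summable (fun n : ℕ => (n : ℝ) * (x ^ n / n !)) := by
  rw [← summable_nat_add_iff 1]
  have h : (fun n : ℕ => ((n + 1 : ℕ) : ℝ) * (x ^ (n + 1) / (n + 1)!)) =
      fun n : ℕ => x * (x ^ n / n !) := by
    funext n
    have h1 : ((n + 1)! : ℝ) = ((n : ℝ) + 1) * (n ! : ℝ) := by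
      rw [Nat.factorial_succ]; push_cast; ring
    have h2 : ((n : ℝ) + 1) ≠ 0 := by positivity
    have h3 : ((n ! : ℝ)) ≠ 0 := by positivity
    push_cast
    rw [h1]
    field_simp
    ring
  exact h ▸ ((Real.summable_pow_div_factorial x).mul_left x)

lemma tsum_mul_exp_div (x : ℝ) :
    ∑' n : ℕ, (n : ℝ) * (x ^ n / n !) = x * Real.exp x := by
  rw [Summable.tsum_eq_zero_add (summable_mul_exp_div x)]
  have h : ∀ n : ℕ, ((n + 1 : ℕ) : ℝ) * (x ^ (n + 1) / (n + 1)!) = x * (x ^ n / n !) := by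
    intro n
    have h1 : ((n + 1)! : ℝ) = ((n : ℝ) + 1) * (n ! : ℝ) := by
      rw [Nat.factorial_succ]; push_cast; ring
    have h2 : ((n : ℝ) + 1) ≠ 0 := by positivity
    have h3 : ((n ! : ℝ)) ≠ 0 := by positivity
    push_cast
    rw [h1]
    field_simp
    ring
  simp only [h, Nat.cast_zero, zero_mul, zero_add]
  rw [tsum_mul_left, tsum_exp_div]

lemma poisson_expand (r x : ℝ) (k : ℕ) :
    poissonPMFReal' r k * x ^ k = Real.exp (-r) * ((r * x) ^ k / k !) := by
  unfold poissonPMFReal'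
  rw [mul_pow]
  ring

lemma poisson_summable (r x : ℝ) :
    Summable (fun k : ℕ => poissonPMFReal' r k * x ^ k) := by
  simp only [poisson_expand]
  exact (Real.summable_pow_div_factorial (r * x)).mul_left _

lemma poisson_tsum (r x : ℝ) :
    ∑' k : ℕ, poissonPMFReal' r k * x ^ k = Real.exp (r * x - r) := by
  simp only [poisson_expand]
  rw [tsum_mul_left, tsum_exp_div, ← Real.exp_add]
  congr 1; ring

lemma poisson_k_summable (r x : ℝ) :
    Summable (fun k : ℕ => poissonPMFReal' r k * x ^ k * k) := by
  have h : (fun k : ℕ => poissonPMFReal' r k * x ^ k * k) =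
      fun k : ℕ => Real.exp (-r) * ((k : ℝ) * ((r * x) ^ k / k !)) := by
    funext k; rw [poisson_expand]; ring
  rw [h]
  exact (summable_mul_exp_div (r * x)).mul_left _

lemma poisson_k_tsum (r x : ℝ) :
    ∑' k : ℕ, poissonPMFReal' r k * x ^ k * k = r * x * Real.exp (r * x - r) := by
  have h : (fun k : ℕ => poissonPMFReal' r k * x ^ k * k) =
      fun k : ℕ => Real.exp (-r) * ((k : ℝ) * ((r * x) ^ k / k !)) := by
    funext k; rw [poisson_expand]; ring
  rw [h, tsum_mul_left, tsum_mul_exp_div,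
    show Real.exp (-r) * (r * x * Real.exp (r * x)) =
      r * x * (Real.exp (-r) * Real.exp (r * x)) by ring, ← Real.exp_add]
  congr 2; ring

lemma poisson_nonneg (r : ℝ) (hr : 0 ≤ r) (k : ℕ) : 0 ≤ poissonPMFReal' r k := by
  unfold poissonPMFReal'; positivity

lemma pi_tsum_prod : ∀ {n : ℕ} (f : Fin n → ℕ → ℝ), (∀ i k, 0 ≤ f i k) →
    (∀ i, Summable (f i)) →
    Summable (fun g : Fin n → ℕ => ∏ i, f i (g i)) ∧
      (∑' g : Fin n → ℕ, ∏ i, f i (g i)) = ∏ i, ∑' k, f i k := by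
  intro n
  induction n with
  | zero =>
    intro f _ _
    simp only [Finset.univ_eq_empty, Finset.prod_empty]
    constructor
    · exact Summable.of_finite
    · exact tsum_eq_single default (fun b hb => absurd (Subsingleton.elim b default) hb)
  | succ n ih =>
    intro f h0 hs
    obtain ⟨ihS, ihT⟩ := ih (fun i => f i.succ) (fun i k => h0 i.succ k) (fun i => hs i.succ)
    set G : (Fin n → ℕ) → ℝ := fun t => ∏ i, f i.succ (t i) with hG
    have hGnn : ∀ t, 0 ≤ G t := fun t => Finset.prod_nonneg fun i _ => h0 i.succ (t i)
    have hprod : Summable (fun p : ℕ × (Fin n → ℕ) => f 0 p.1 * G p.2) :=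
      (hs 0).mul_of_nonneg ihS (fun k => h0 0 k) hGnn
    set e : (ℕ × (Fin n → ℕ)) ≃ (Fin (n + 1) → ℕ) := Fin.consEquiv fun _ => ℕ with he
    have hcomp : (fun g : Fin (n + 1) → ℕ => ∏ i, f i (g i)) ∘ e =
        fun p : ℕ × (Fin n → ℕ) => f 0 p.1 * G p.2 := by
      funext p
      simp only [Function.comp_apply, he, Fin.consEquiv_apply, Fin.prod_univ_succ,
        Fin.cons_zero, Fin.cons_succ, hG]
    have hsF : Summable (fun g : Fin (n + 1) → ℕ => ∏ i, f i (g i)) := by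
      rw [← e.summable_iff, hcomp]; exact hprod
    refine ⟨hsF, ?_⟩
    rw [← e.tsum_eq]
    calc ∑' p : ℕ × (Fin n → ℕ), ∏ i, f i (e p i)
        = ∑' p : ℕ × (Fin n → ℕ), f 0 p.1 * G p.2 := by
          exact tsum_congr fun p => congrFun hcomp p
      _ = (∑' k, f 0 k) * (∑' t, G t) := (Summable.tsum_mul_tsum (hs 0) ihS hprod).symm
      _ = ∏ i, ∑' k, f i k := by rw [Fin.prod_univ_succ, ihT]

lemma factor_summable (r y : ℝ) (P : Prop) [Decidable P] :
    Summable (fun k : ℕ => poissonPMFReal' r k * y ^ k * (if P then (k : ℝ) else 1)) := by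
  by_cases hP : P
  · simp only [if_pos hP]; exact poisson_k_summable r y
  · simp only [if_neg hP, mul_one]; exact poisson_summable r y

lemma factor_nonneg {r y : ℝ} (hr : 0 ≤ r) (hy : 0 ≤ y) (P : Prop) [Decidable P] (k : ℕ) :
    0 ≤ poissonPMFReal' r k * y ^ k * (if P then (k : ℝ) else 1) := by
  apply mul_nonneg (mul_nonneg (poisson_nonneg r hr k) (pow_nonneg hy k))
  split
  · exact Nat.cast_nonneg k
  · exact zero_le_one

lemma factor_tsum (r y : ℝ) (P : Prop) [Decidable P] :
    ∑' k : ℕ, poissonPMFReal' r k * y ^ k * (if P then (k : ℝ) else 1)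
      = (if P then r * y else 1) * Real.exp (r * y - r) := by
  by_cases hP : P
  · simp only [if_pos hP]; exact poisson_k_tsum r y
  · simp only [if_neg hP, mul_one, one_mul]; exact poisson_tsum r y

lemma inner_tsum {Q : ℕ} (μ x : Fin Q → ℝ) (hμ : ∀ b, 0 ≤ μ b) (hx : ∀ b, 0 ≤ x b) :
    ∑' g : Fin Q → ℕ, (∏ b, poissonPMFReal' (μ b) (g b)) *
        ((∑ b, (g b : ℝ)) * (1 - ∏ b, x b ^ g b))
      = ∑ b, (μ b - μ b * x b * Real.exp (∑ c, (μ c * x c - μ c))) := by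
  classical
  set A : Fin Q → Fin Q → ℕ → ℝ :=
    fun b c k => poissonPMFReal' (μ c) k * (1 : ℝ) ^ k * (if c = b then (k : ℝ) else 1) with hA
  set B : Fin Q → Fin Q → ℕ → ℝ :=
    fun b c k => poissonPMFReal' (μ c) k * x c ^ k * (if c = b then (k : ℝ) else 1) with hB
  have hAs : ∀ b, Summable (fun g : Fin Q → ℕ => ∏ c, A b c (g c)) ∧
      (∑' g : Fin Q → ℕ, ∏ c, A b c (g c)) = ∏ c, ∑' k, A b c k :=
    fun b => pi_tsum_prod (A b) (fun c k => factor_nonneg (hμ c) zero_le_one _ k)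
      (fun c => factor_summable (μ c) 1 _)
  have hBs : ∀ b, Summable (fun g : Fin Q → ℕ => ∏ c, B b c (g c)) ∧
      (∑' g : Fin Q → ℕ, ∏ c, B b c (g c)) = ∏ c, ∑' k, B b c k :=
    fun b => pi_tsum_prod (B b) (fun c k => factor_nonneg (hμ c) (hx c) _ k)
      (fun c => factor_summable (μ c) (x c) _)
  have hpt : ∀ g : Fin Q → ℕ,
      (∏ b, poissonPMFReal' (μ b) (g b)) * ((∑ b, (g b : ℝ)) * (1 - ∏ b, x b ^ g b))
        = ∑ b, ((∏ c, A b c (g c)) - ∏ c, B b c (g c)) := by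
    intro g
    have hprodA : ∀ b, (∏ c, A b c (g c)) =
        (∏ c, poissonPMFReal' (μ c) (g c)) * (g b : ℝ) := by
      intro b
      simp only [hA, one_pow, mul_one]
      rw [Finset.prod_mul_distrib, Finset.prod_ite_eq' Finset.univ b (fun c => ((g c : ℝ)))]
      simp
    have hprodB : ∀ b, (∏ c, B b c (g c)) =
        (∏ c, poissonPMFReal' (μ c) (g c)) * (∏ c, x c ^ g c) * (g b : ℝ) := by
      intro b
      simp only [hB]
      rw [Finset.prod_mul_distrib, Finset.prod_mul_distrib,
        Finset.prod_ite_eq' Finset.univ b (fun c => ((g c : ℝ)))]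
      simp
    calc (∏ b, poissonPMFReal' (μ b) (g b)) * ((∑ b, (g b : ℝ)) * (1 - ∏ b, x b ^ g b))
        = ∑ b, ((g b : ℝ) *
            ((∏ c, poissonPMFReal' (μ c) (g c)) * (1 - ∏ c, x c ^ g c))) := by
          rw [← Finset.sum_mul]; ring
      _ = ∑ b, ((∏ c, A b c (g c)) - ∏ c, B b c (g c)) := by
          refine Finset.sum_congr rfl fun b _ => ?_
          rw [hprodA b, hprodB b]; ring
  rw [tsum_congr hpt, Summable.tsum_finsetSum (fun b _ => ((hAs b).1.sub (hBs b).1))]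
  refine Finset.sum_congr rfl fun b _ => ?_
  rw [Summable.tsum_sub (hAs b).1 (hBs b).1, (hAs b).2, (hBs b).2]
  have hAval : (∏ c, ∑' k, A b c k) = μ b := by
    have : ∀ c, (∑' k, A b c k) = if c = b then μ c else 1 := by
      intro c
      rw [hA]
      simp only []
      rw [factor_tsum (μ c) 1 (c = b)]
      simp [Real.exp_zero]
    simp only [this]
    rw [Finset.prod_ite_eq' Finset.univ b (fun c => μ c)]
    simp
  have hBval : (∏ c, ∑' k, B b c k) =
      μ b * x b * Real.exp (∑ c, (μ c * x c - μ c)) := by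
    have : ∀ c, (∑' k, B b c k) =
        (if c = b then μ c * x c else 1) * Real.exp (μ c * x c - μ c) := by
      intro c
      rw [hB]
      exact factor_tsum (μ c) (x c) (c = b)
    simp only [this]
    rw [Finset.prod_mul_distrib, Finset.prod_ite_eq' Finset.univ b (fun c => μ c * x c),
      Real.exp_sum]
    simp
  rw [hAval, hBval]

/-- For the multi-type Poisson branching process `B_K` started from a single particle whose
type is distributed according to `π`, with `ρ a` the survival probability from type `a`
(the extinction probabilities satisfying the standard fixed-point equation `hρ`),
the expectation `σ(K) = E[|B| ⬝ 1{B_K survives}]` of the first generation size on the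
survival event (the process dies out iff all children's subtrees die out, so
`E[|B(a)| ⬝ 1{survival}] = ∑' f, P(B(a)=f) * |f| * (1 - ∏ b (1-ρ b)^(f b))`)
satisfies `σ(K) = ∑ a b, K a b * (1 - (1 - ρ a)(1 - ρ b)) * π a * π b`. -/
theorem sigma_first_generation_on_survival
    (Q : ℕ) (K : Matrix (Fin Q) (Fin Q) ℝ) (π : Fin Q → ℝ)
    (hK : ∀ a b, 0 ≤ K a b) (hKsymm : K.IsSymm)
    (hπ : ∀ a, 0 < π a) (hπ1 : ∑ a, π a = 1)
    (ρ : Fin Q → ℝ) (hρ0 : ∀ a, 0 ≤ ρ a) (hρ1 : ∀ a, ρ a ≤ 1)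
    (hρ : ∀ a, 1 - ρ a = Real.exp (∑ b, K a b * π b * ((1 - ρ b) - 1))) :
    (∑ a, π a * ∑' f : Fin Q → ℕ, (∏ b, poissonPMFReal' (K a b * π b) (f b)) *
        ((∑ b, (f b : ℝ)) * (1 - ∏ b, (1 - ρ b) ^ (f b))))
      = ∑ a, ∑ b, K a b * (1 - (1 - ρ a) * (1 - ρ b)) * π a * π b := by
  refine Finset.sum_congr rfl fun a _ => ?_
  have hinner := inner_tsum (fun b => K a b * π b) (fun b => 1 - ρ b)
    (fun b => mul_nonneg (hK a b) (hπ b).le) (fun b => sub_nonneg.2 (hρ1 b))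
  rw [hinner]
  have hexp : Real.exp (∑ c, (K a c * π c * (1 - ρ c) - K a c * π c)) = 1 - ρ a := by
    rw [hρ a]
    congr 1
    exact Finset.sum_congr rfl fun c _ => by ring
  rw [hexp, Finset.mul_sum]
  exact Finset.sum_congr rfl fun b _ => by ring
end

section
/- Let D̄ be an n×n real symmetric matrix of the form D̄ = C ⋆ J − diag(d̃), where C is a Q×Q symmetric matrix, the index set {1,…,n} is partitioned into Q blocks of sizes n_1,…,n_Q, (C ⋆ J)_{ij} = C_{ab} when i is in block a and j is in block b, and diag(d̃) assigns diagonal value d̃_a to indices in block a. Then the spectrum of D̄ consists of the Q eigenvalues of the Q×Q matrix M_{ab} = C_{ab}√(n_a n_b) − δ_{ab} d̃_a, together with the eigenvalue −d̃_a with multiplicity n_a − 1 for each a = 1,…,Q. -/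
open scoped BigOperators Polynomial

open Matrix

theorem aux_main
    {n Q : ℕ} (β : Fin n → Fin Q)
    {K : Type} [Field K]
    (e : Fin Q → K) (he : ∀ a, e a ≠ 0)
    (s : Fin Q → K) (hs : ∀ a, s a ≠ 0)
    (na : Fin Q → ℕ) (hna : ∀ a, na a = Fintype.card {i : Fin n // β i = a})
    (h1 : ∀ a, 1 ≤ na a)
    (hsq : ∀ a, s a * s a = (na a : K))
    (C' : Matrix (Fin Q) (Fin Q) K) :
    (Matrix.diagonal (fun i : Fin n => e (β i)) -
        (Matrix.of fun (i : Fin n) (a : Fin Q) => if β i = a then (1:K) else 0) * C' *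
        (Matrix.of fun (i : Fin n) (a : Fin Q) => if β i = a then (1:K) else 0)ᵀ).det =
      (Matrix.diagonal e - Matrix.diagonal s * C' * Matrix.diagonal s).det *
        ∏ a : Fin Q, (e a) ^ (na a - 1) := by
  set A : Matrix (Fin n) (Fin Q) K :=
    Matrix.of fun (i : Fin n) (a : Fin Q) => if β i = a then (1:K) else 0 with hA
  set E : Matrix (Fin n) (Fin n) K := Matrix.diagonal (fun i => e (β i)) with hE
  set Einv : Matrix (Fin n) (Fin n) K := Matrix.diagonal (fun i => (e (β i))⁻¹) with hEinv
  have hEE : E * Einv = 1 := by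
    rw [hE, hEinv, diagonal_mul_diagonal]
    convert Matrix.diagonal_one
    exact mul_inv_cancel₀ (he _)
  -- step 1: factor out E
  have step1 : E - A * C' * Aᵀ = E * (1 - Einv * (A * C' * Aᵀ)) := by
    rw [Matrix.mul_sub, mul_one, ← Matrix.mul_assoc, hEE, Matrix.one_mul]
  -- step 2: Weinstein–Aronszajn
  have step2 : (1 - Einv * (A * C' * Aᵀ)).det = (1 - C' * (Aᵀ * Einv * A)).det := by
    have : (1 : Matrix (Fin n) (Fin n) K) - Einv * (A * C' * Aᵀ)
        = 1 - (Einv * A) * (C' * Aᵀ) := by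
      rw [Matrix.mul_assoc, Matrix.mul_assoc]
    rw [this, Matrix.det_one_sub_mul_comm]
    congr 1
    rw [Matrix.mul_assoc, Matrix.mul_assoc]
  -- step 3: compute A^T Einv A
  have step3 : Aᵀ * Einv * A = Matrix.diagonal (fun a => (na a : K) * (e a)⁻¹) := by
    ext a b
    simp only [Matrix.mul_apply, Matrix.transpose_apply, hA, hEinv, Matrix.of_apply,
      Matrix.diagonal_apply]
    by_cases hab : a = b
    · subst hab
      simp only [if_pos rfl]
      rw [hna, Fintype.card_subtype]
      push_cast
      rw [Finset.card_eq_sum_ones]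
      push_cast
      rw [Finset.sum_mul, Finset.sum_filter]
      congr 1
      ext i
      by_cases hi : β i = a
      · simp [hi, diagonal_apply, Finset.sum_ite_eq]
      · simp [hi, diagonal_apply, Finset.sum_ite_eq]
    · rw [if_neg hab]
      apply Finset.sum_eq_zero
      intro i _
      by_cases hia : β i = a <;> by_cases hib : β i = b <;>
        simp_all [diagonal_apply]
  set S : Matrix (Fin Q) (Fin Q) K := Matrix.diagonal s with hS
  set Sinv : Matrix (Fin Q) (Fin Q) K := Matrix.diagonal (fun a => (s a)⁻¹) with hSinv
  set N : Matrix (Fin Q) (Fin Q) K := Matrix.diagonal (fun a => (na a : K)) with hN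
  set F : Matrix (Fin Q) (Fin Q) K := Matrix.diagonal e with hF
  set Finv : Matrix (Fin Q) (Fin Q) K := Matrix.diagonal (fun a => (e a)⁻¹) with hFinv
  have hFF : F * Finv = 1 := by
    rw [hF, hFinv, diagonal_mul_diagonal]
    convert Matrix.diagonal_one
    exact mul_inv_cancel₀ (he _)
  have hSS : Sinv * S = 1 := by
    rw [hS, hSinv, diagonal_mul_diagonal]
    convert Matrix.diagonal_one
    exact inv_mul_cancel₀ (hs _)
  have hSN : S * S = N := by
    rw [hS, hN, diagonal_mul_diagonal]
    exact congrArg Matrix.diagonal (funext hsq)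
  -- step 4
  have step4 : (1 : Matrix (Fin Q) (Fin Q) K)
      - C' * Matrix.diagonal (fun a => (na a : K) * (e a)⁻¹) = (F - C' * N) * Finv := by
    rw [Matrix.sub_mul, hFF, Matrix.mul_assoc]
    congr 2
    rw [hN, hFinv, diagonal_mul_diagonal]
  -- step 5: similarity
  have step5 : (F - C' * N).det = (F - S * C' * S).det := by
    have key : F - C' * N = Sinv * (F - S * C' * S) * S := by
      rw [Matrix.mul_sub, Matrix.sub_mul]
      congr 1
      · rw [hSinv, hF, hS, diagonal_mul_diagonal, diagonal_mul_diagonal]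
        refine (congrArg Matrix.diagonal (funext fun a => ?_)).symm
        rw [mul_comm ((s a)⁻¹) (e a), mul_assoc, inv_mul_cancel₀ (hs a), mul_one]
      · rw [← Matrix.mul_assoc, ← Matrix.mul_assoc, hSS, Matrix.one_mul,
          Matrix.mul_assoc, hSN]
    rw [key, Matrix.det_mul, Matrix.det_mul, mul_comm, ← mul_assoc,
      mul_comm (S.det), ← Matrix.det_mul, hSS, Matrix.det_one, one_mul]
  -- step 6: det E
  have step6 : E.det = ∏ a : Fin Q, (e a) ^ (na a) := by
    rw [hE, Matrix.det_diagonal, ← Finset.prod_fiberwise' Finset.univ β e]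
    refine Finset.prod_congr rfl fun a _ => ?_
    rw [Finset.prod_const, hna, Fintype.card_subtype]
  -- assembly
  have hprod : (∏ a : Fin Q, (e a) ^ (na a)) * ∏ a : Fin Q, (e a)⁻¹
      = ∏ a : Fin Q, (e a) ^ (na a - 1) := by
    rw [← Finset.prod_mul_distrib]
    refine Finset.prod_congr rfl fun a _ => ?_
    conv_lhs => rw [← Nat.sub_add_cancel (h1 a), pow_succ]
    rw [mul_assoc, mul_inv_cancel₀ (he a), mul_one]
  calc (E - A * C' * Aᵀ).det
      = E.det * (1 - C' * (Aᵀ * Einv * A)).det := by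
        rw [step1, Matrix.det_mul, step2]
    _ = E.det * ((F - C' * N).det * Finv.det) := by
        rw [step3, step4, Matrix.det_mul]
    _ = (F - S * C' * S).det * (E.det * Finv.det) := by rw [step5]; ring
    _ = (F - S * C' * S).det * ∏ a : Fin Q, (e a) ^ (na a - 1) := by
        rw [step6, hFinv, Matrix.det_diagonal, hprod]


/-- Spectrum of the block-constant matrix `D̄ = C ⋆ J - diag(d̃)`: its characteristic
polynomial factors as the characteristic polynomial of the `Q × Q` matrix
`M a b = C a b * √(n_a n_b) - δ_{ab} d̃ a` times `∏ a, (X + d̃ a)^(n_a - 1)`;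
equivalently, the spectrum of `D̄` consists of the `Q` eigenvalues of `M` together with
`-d̃ a` with multiplicity `n_a - 1` for each block `a`. -/
theorem block_constant_matrix_charpoly
    (n Q : ℕ) (β : Fin n → Fin Q)
    (hblock : ∀ a : Fin Q, 1 ≤ Fintype.card {i : Fin n // β i = a})
    (C : Matrix (Fin Q) (Fin Q) ℝ) (hC : C.IsSymm) (d : Fin Q → ℝ)
    (Dbar : Matrix (Fin n) (Fin n) ℝ)
    (hDbar : ∀ i j, Dbar i j = C (β i) (β j) - if i = j then d (β i) else 0)
    (M : Matrix (Fin Q) (Fin Q) ℝ)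
    (hM : ∀ a b, M a b =
      C a b * Real.sqrt ((Fintype.card {i : Fin n // β i = a} : ℝ) *
        (Fintype.card {i : Fin n // β i = b} : ℝ)) - if a = b then d a else 0) :
    Dbar.charpoly =
      M.charpoly * ∏ a : Fin Q,
        (Polynomial.X - Polynomial.C (-(d a))) ^ (Fintype.card {i : Fin n // β i = a} - 1) := by
  classical
  set K := FractionRing (Polynomial ℝ) with hK
  set φ : ℝ[X] →+* K := algebraMap ℝ[X] K with hφ
  have hinj : Function.Injective φ := IsFractionRing.injective ℝ[X] K
  set c : ℝ →+* K := φ.comp (Polynomial.C : ℝ →+* ℝ[X]) with hc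
  have hcinj : Function.Injective c := hinj.comp Polynomial.C_injective
  set na : Fin Q → ℕ := fun a => Fintype.card {i : Fin n // β i = a} with hna'
  set e : Fin Q → K := fun a => φ (Polynomial.X + Polynomial.C (d a)) with he'
  set s : Fin Q → K := fun a => c (Real.sqrt (na a)) with hs'
  have he : ∀ a, e a ≠ 0 := by
    intro a h
    have h0 : φ (Polynomial.X + Polynomial.C (d a)) = φ 0 := by rw [map_zero]; exact h
    exact (Polynomial.monic_X_add_C (d a)).ne_zero (hinj h0)
  have hs : ∀ a, s a ≠ 0 := by
    intro a h
    have h0 : c (Real.sqrt (na a)) = c 0 := by rw [map_zero]; exact h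
    have h2 : Real.sqrt (na a) = 0 := hcinj h0
    have : (0:ℝ) < Real.sqrt (na a) :=
      Real.sqrt_pos.mpr (by exact_mod_cast Nat.lt_of_lt_of_le Nat.zero_lt_one (hblock a))
    simp [h2] at this
  have hsq : ∀ a, s a * s a = (na a : K) := by
    intro a
    show c (Real.sqrt (na a)) * c (Real.sqrt (na a)) = _
    rw [← _root_.map_mul, Real.mul_self_sqrt (Nat.cast_nonneg _)]
    simp [map_natCast]
  set C' : Matrix (Fin Q) (Fin Q) K := C.map c with hC'
  set A : Matrix (Fin n) (Fin Q) K :=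
    Matrix.of fun (i : Fin n) (a : Fin Q) => if β i = a then (1:K) else 0 with hA
  have hAC : ∀ i j, (A * C' * Aᵀ) i j = c (C (β i) (β j)) := by
    intro i j
    rw [Matrix.mul_apply]
    have h1 : ∀ b, (A * C') i b = C' (β i) b := by
      intro b
      rw [Matrix.mul_apply]
      simp only [hA, Matrix.of_apply, ite_mul, one_mul, zero_mul]
      rw [Finset.sum_ite_eq Finset.univ (β i) (fun a => C' a b)]
      simp
    simp only [h1]
    simp only [Matrix.transpose_apply, hA, Matrix.of_apply, mul_ite, mul_one, mul_zero]
    rw [Finset.sum_ite_eq Finset.univ (β j) (fun b => C' (β i) b)]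
    simp [hC']
  -- map of charmatrix Dbar
  have hmap1 : (Matrix.charmatrix Dbar).map φ
      = Matrix.diagonal (fun i => e (β i)) - A * C' * Aᵀ := by
    ext i j
    rw [Matrix.map_apply, Matrix.sub_apply, hAC, Matrix.charmatrix_apply, hDbar]
    by_cases hij : i = j
    · subst hij
      simp only [Matrix.diagonal_apply_eq, he', map_sub, map_add, hc, RingHom.comp_apply,
        eq_self_iff_true, if_true]
      ring
    · simp only [Matrix.diagonal_apply_ne _ hij, if_neg hij, map_sub, hc, sub_zero,
        RingHom.comp_apply, map_zero]
  have hmap2 : (Matrix.charmatrix M).map φ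
      = Matrix.diagonal e - Matrix.diagonal s * C' * Matrix.diagonal s := by
    ext a b
    have hSCS : (Matrix.diagonal s * C' * Matrix.diagonal s) a b = s a * c (C a b) * s b := by
      rw [Matrix.mul_diagonal, Matrix.diagonal_mul]
      simp only [hC', Matrix.map_apply]
    rw [Matrix.map_apply, Matrix.sub_apply, hSCS, Matrix.charmatrix_apply, hM]
    have hsqrt : Real.sqrt ((Fintype.card {i : Fin n // β i = a} : ℝ) *
        (Fintype.card {i : Fin n // β i = b} : ℝ))
        = Real.sqrt (na a) * Real.sqrt (na b) := Real.sqrt_mul (Nat.cast_nonneg _) _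
    by_cases hab : a = b
    · subst hab
      simp only [Matrix.diagonal_apply_eq, he', hs', map_sub, map_add, if_pos rfl,
        _root_.map_mul, hsqrt, hc, RingHom.comp_apply, eq_self_iff_true, if_true]
      ring
    · simp only [Matrix.diagonal_apply_ne _ hab, if_neg hab, map_sub, hs', sub_zero,
        _root_.map_mul, hsqrt, hc, RingHom.comp_apply, map_zero]
      ring
  apply hinj
  calc φ Dbar.charpoly
      = ((Matrix.charmatrix Dbar).map φ).det := by
        rw [Matrix.charpoly, RingHom.map_det, RingHom.mapMatrix_apply]
    _ = ((Matrix.charmatrix M).map φ).det * ∏ a : Fin Q, (e a) ^ (na a - 1) := by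
        rw [hmap1, hmap2]
        exact aux_main β e he s hs na (fun a => rfl) hblock hsq C'
    _ = φ (M.charpoly * ∏ a : Fin Q,
          (Polynomial.X - Polynomial.C (-(d a))) ^ (na a - 1)) := by
        rw [_root_.map_mul, map_prod, Matrix.charpoly, RingHom.map_det,
          RingHom.mapMatrix_apply]
        congr 1
        refine Finset.prod_congr rfl fun a _ => ?_
        rw [map_pow, he']
        simp only [map_add, map_sub, map_neg, sub_neg_eq_add]
end

section
/- Davis–Kahan sin Θ theorem (Frobenius version): Let H, H' ∈ ℝ^{n×n} be symmetric, let V ⊂ ℝ be an interval, and let W, W' ∈ ℝ^{n×d} have orthonormal columns spanning the sum of eigenspaces of H (resp. H') for eigenvalues in V. Let δ > 0 be the minimum distance between any eigenvalue of H in V and any eigenvalue of H' not in V. Then there exists an orthogonal matrix R ∈ ℝ^{d×d} such that ‖W R − W'‖_F ≤ √2 · ‖H − H'‖_F / δ. -/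
open scoped BigOperators
open Matrix

/-- Frobenius norm of a (rectangular) real matrix. -/
noncomputable def frobNorm' {m n : ℕ} (A : Matrix (Fin m) (Fin n) ℝ) : ℝ :=
  Real.sqrt (∑ i, ∑ j, (A i j) ^ 2)

namespace DKAux

/-- squared Frobenius norm -/
noncomputable def fsq {m n : Type*} [Fintype m] [Fintype n] (A : Matrix m n ℝ) : ℝ :=
  ∑ i, ∑ j, (A i j) ^ 2

lemma fsq_nonneg {m n : Type*} [Fintype m] [Fintype n] (A : Matrix m n ℝ) : 0 ≤ fsq A := by
  unfold fsq; positivity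

lemma fsq_eq_trace {m n : Type*} [Fintype m] [Fintype n] (A : Matrix m n ℝ) :
    fsq A = trace (Aᵀ * A) := by
  unfold fsq Matrix.trace
  rw [Finset.sum_comm]
  refine Finset.sum_congr rfl fun i _ => ?_
  simp only [Matrix.diag_apply, Matrix.mul_apply, Matrix.transpose_apply]
  refine Finset.sum_congr rfl fun j _ => ?_
  ring

lemma fsq_left {m n p q : Type*} [Fintype m] [Fintype n] [Fintype p] [Fintype q] [DecidableEq m]
    (W : Matrix m p ℝ) (U : Matrix m q ℝ) (h : W * Wᵀ + U * Uᵀ = 1) (A : Matrix m n ℝ) :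
    fsq (Wᵀ * A) + fsq (Uᵀ * A) = fsq A := by
  rw [fsq_eq_trace, fsq_eq_trace, fsq_eq_trace, ← trace_add]
  congr 1
  calc (Wᵀ * A)ᵀ * (Wᵀ * A) + (Uᵀ * A)ᵀ * (Uᵀ * A)
      = Aᵀ * ((W * Wᵀ + U * Uᵀ) * A) := by
        simp only [Matrix.transpose_mul, Matrix.transpose_transpose, Matrix.add_mul,
          Matrix.mul_add, Matrix.mul_assoc]
    _ = Aᵀ * A := by rw [h, Matrix.one_mul]

lemma fsq_right {m n p q : Type*} [Fintype m] [Fintype n] [Fintype p] [Fintype q] [DecidableEq m]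
    (W : Matrix m p ℝ) (U : Matrix m q ℝ) (h : W * Wᵀ + U * Uᵀ = 1) (A : Matrix n m ℝ) :
    fsq (A * W) + fsq (A * U) = fsq A := by
  rw [fsq_eq_trace, fsq_eq_trace, fsq_eq_trace]
  have h1 : (A * W)ᵀ * (A * W) = Wᵀ * ((Aᵀ * A) * W) := by
    simp only [Matrix.transpose_mul, Matrix.mul_assoc]
  have h2 : (A * U)ᵀ * (A * U) = Uᵀ * ((Aᵀ * A) * U) := by
    simp only [Matrix.transpose_mul, Matrix.mul_assoc]
  rw [h1, h2, Matrix.trace_mul_comm (Wᵀ), Matrix.trace_mul_comm (Uᵀ), ← trace_add]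
  calc trace (Aᵀ * A * W * Wᵀ + Aᵀ * A * U * Uᵀ)
      = trace ((Aᵀ * A) * (W * Wᵀ + U * Uᵀ)) := by
        simp only [Matrix.mul_add, Matrix.mul_assoc]
    _ = trace (Aᵀ * A) := by rw [h, Matrix.mul_one]

lemma fsq_left_le {m n p q : Type*} [Fintype m] [Fintype n] [Fintype p] [Fintype q] [DecidableEq m]
    (W : Matrix m p ℝ) (U : Matrix m q ℝ) (h : W * Wᵀ + U * Uᵀ = 1) (A : Matrix m n ℝ) :
    fsq (Uᵀ * A) ≤ fsq A := by
  have := fsq_left W U h A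
  have := fsq_nonneg (Wᵀ * A)
  linarith

lemma fsq_right_le {m n p q : Type*} [Fintype m] [Fintype n] [Fintype p] [Fintype q] [DecidableEq m]
    (W : Matrix m p ℝ) (U : Matrix m q ℝ) (h : W * Wᵀ + U * Uᵀ = 1) (A : Matrix n m ℝ) :
    fsq (A * W) ≤ fsq A := by
  have := fsq_right W U h A
  have := fsq_nonneg (A * U)
  linarith

lemma fsq_sub_comm {m n : Type*} [Fintype m] [Fintype n] (A B : Matrix m n ℝ) :
    fsq (A - B) = fsq (B - A) := by
  unfold fsq
  refine Finset.sum_congr rfl fun i _ => Finset.sum_congr rfl fun j _ => ?_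
  simp only [Matrix.sub_apply]
  ring

lemma stdBasis_transpose {d : ℕ} (i j : Fin d) (c : ℝ) :
    (Matrix.single i j c)ᵀ = Matrix.single j i c := by
  ext a b; simp [Matrix.single, and_comm]

lemma mul_ne {d : ℕ} {i j k l : Fin d} (h : j ≠ k) (c e : ℝ) :
    Matrix.single i j c * Matrix.single k l e = 0 :=
  Matrix.single_mul_single_of_ne _ _ _ _ h _

lemma rot_orth {d : ℕ} (i j : Fin d) (hij : i ≠ j) (c s : ℝ) (h : c^2 + s^2 = 1) :
    (1 + Matrix.single i i (c-1) + Matrix.single j j (c-1) + Matrix.single i j s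
      + Matrix.single j i (-s) : Matrix (Fin d) (Fin d) ℝ)ᵀ *
    (1 + Matrix.single i i (c-1) + Matrix.single j j (c-1) + Matrix.single i j s
      + Matrix.single j i (-s)) = 1 := by
  have hji : j ≠ i := hij.symm
  simp only [Matrix.transpose_add, Matrix.transpose_one, stdBasis_transpose,
    Matrix.add_mul, Matrix.mul_add, Matrix.one_mul, Matrix.mul_one,
    Matrix.single_mul_single_same, mul_ne hij, mul_ne hji, add_zero, zero_add]
  ext a b
  by_cases hai : i = a <;> by_cases haj : j = a <;> by_cases hbi : i = b <;> by_cases hbj : j = b <;>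
    simp_all [Matrix.single, Matrix.one_apply, Matrix.add_apply] <;> nlinarith [h]

lemma trace_std {d : ℕ} (i j : Fin d) (c : ℝ) (M : Matrix (Fin d) (Fin d) ℝ) :
    trace (Matrix.single i j c * M) = c * M j i := by
  rw [Matrix.trace]
  rw [Finset.sum_eq_single i]
  · simp
  · intro a _ ha; simp [Matrix.diag, Matrix.single_mul_apply_of_ne _ _ _ _ _ ha]
  · simp

lemma spectral_real {d : ℕ} (M : Matrix (Fin d) (Fin d) ℝ) (hM : Mᵀ = M) :
    ∃ (Q : Matrix (Fin d) (Fin d) ℝ) (e : Fin d → ℝ), Qᵀ * Q = 1 ∧ M = Q * Matrix.diagonal e * Qᵀ := by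
  have hherm : M.IsHermitian := by
    rwa [Matrix.IsHermitian, Matrix.conjTranspose_eq_transpose_of_trivial]
  refine ⟨hherm.eigenvectorUnitary, hherm.eigenvalues, ?_, ?_⟩
  · have := (Matrix.mem_unitaryGroup_iff'.mp hherm.eigenvectorUnitary.2)
    simpa [Matrix.star_eq_conjTranspose, Matrix.conjTranspose_eq_transpose_of_trivial] using this
  · have := hherm.spectral_theorem
    simpa [Matrix.star_eq_conjTranspose, Matrix.conjTranspose_eq_transpose_of_trivial,
      Function.comp] using this

lemma exists_rot {d q : ℕ} (S : Matrix (Fin d) (Fin d) ℝ) (B : Matrix (Fin q) (Fin d) ℝ)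
    (hB : Sᵀ * S + Bᵀ * B = 1) :
    ∃ R : Matrix (Fin d) (Fin d) ℝ, Rᵀ * R = 1 ∧ trace (Sᵀ * S) ≤ trace (Rᵀ * S) := by
  classical
  set O : Set (Matrix (Fin d) (Fin d) ℝ) := {R | Rᵀ * R = 1} with hOdef
  have hOne : (1 : Matrix (Fin d) (Fin d) ℝ) ∈ O := by simp [hOdef]
  have hcont : Continuous fun R : Matrix (Fin d) (Fin d) ℝ => trace (Rᵀ * S) :=
    ((continuous_id.matrix_transpose).matrix_mul continuous_const).matrix_trace
  have hOclosed : IsClosed O := by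
    have hc : Continuous fun R : Matrix (Fin d) (Fin d) ℝ => Rᵀ * R :=
      (continuous_id.matrix_transpose).matrix_mul continuous_id
    exact isClosed_eq hc continuous_const
  have hOcompact : IsCompact O := by
    have hK : IsCompact {R : Matrix (Fin d) (Fin d) ℝ | ∀ a b, R a b ∈ Set.Icc (-1 : ℝ) 1} := by
      have h0 : {R : Matrix (Fin d) (Fin d) ℝ | ∀ a b, R a b ∈ Set.Icc (-1 : ℝ) 1}
          = Set.univ.pi fun _ : Fin d => Set.univ.pi fun _ : Fin d => Set.Icc (-1 : ℝ) 1 := by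
        ext R
        constructor
        · exact fun h a _ b _ => h a b
        · exact fun h a b => h a (Set.mem_univ a) b (Set.mem_univ b)
      rw [h0]
      exact isCompact_univ_pi fun _ => isCompact_univ_pi fun _ => isCompact_Icc
    refine hK.of_isClosed_subset hOclosed ?_
    intro R hR
    have hR' : Rᵀ * R = 1 := hR
    intro a b
    have hsum : ∑ k, R k b * R k b = 1 := by
      have h1 : (Rᵀ * R) b b = (1 : Matrix (Fin d) (Fin d) ℝ) b b := by rw [hR']
      simpa [Matrix.mul_apply, Matrix.one_apply] using h1
    have hle : R a b * R a b ≤ 1 := by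
      rw [← hsum]
      exact Finset.single_le_sum (fun k _ => mul_self_nonneg (R k b)) (Finset.mem_univ a)
    constructor
    · nlinarith
    · nlinarith
  obtain ⟨R₀, hR₀O, hmax⟩ := hOcompact.exists_isMaxOn ⟨1, hOne⟩ hcont.continuousOn
  have hR₀ : R₀ᵀ * R₀ = 1 := hR₀O
  have hR₀R₀ : R₀ * R₀ᵀ = 1 := mul_eq_one_comm.mp hR₀
  set M : Matrix (Fin d) (Fin d) ℝ := R₀ᵀ * S with hMdef
  have hP : ∀ Q : Matrix (Fin d) (Fin d) ℝ, Qᵀ * Q = 1 → trace (Q * M) ≤ trace M := by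
    intro Q hQ
    have hQQ : Q * Qᵀ = 1 := mul_eq_one_comm.mp hQ
    have hmem : R₀ * Qᵀ ∈ O := by
      show (R₀ * Qᵀ)ᵀ * (R₀ * Qᵀ) = 1
      rw [Matrix.transpose_mul, Matrix.transpose_transpose, Matrix.mul_assoc,
        ← Matrix.mul_assoc R₀ᵀ, hR₀, Matrix.one_mul, hQQ]
    have h1 := hmax hmem
    have h2 : trace ((R₀ * Qᵀ)ᵀ * S) = trace (Q * M) := by
      rw [Matrix.transpose_mul, Matrix.transpose_transpose, hMdef, Matrix.mul_assoc]
    rw [← h2]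
    exact h1
  -- symmetry of M
  have key : ∀ i j : Fin d, i ≠ j → M j i = M i j := by
    intro i j hij
    have hABle : ∀ c s : ℝ, c^2 + s^2 = 1 →
        c * (M i i + M j j) + s * (M j i - M i j) ≤ M i i + M j j := by
      intro c s hcs
      have h2 := hP _ (rot_orth i j hij c s hcs)
      have h3 : trace ((1 + Matrix.single i i (c-1) + Matrix.single j j (c-1)
          + Matrix.single i j s + Matrix.single j i (-s)) * M)
          = trace M + (c-1) * M i i + (c-1) * M j j + s * M j i + (-s) * M i j := by
        simp only [Matrix.add_mul, Matrix.one_mul, trace_add, trace_std]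
      rw [h3] at h2
      linarith
    by_contra hne
    have hBv : (M j i - M i j) ≠ 0 := sub_ne_zero.mpr hne
    set A := M i i + M j j with hA
    set Bv := M j i - M i j with hBvdef
    have hpos : 0 < A^2 + Bv^2 := by
      have : 0 < Bv^2 := by positivity
      nlinarith [sq_nonneg A]
    set r := Real.sqrt (A^2 + Bv^2) with hrdef
    have hr : 0 < r := Real.sqrt_pos.mpr hpos
    have hr2 : r^2 = A^2 + Bv^2 := Real.sq_sqrt hpos.le
    have h1 : (A/r)^2 + (Bv/r)^2 = 1 := by
      field_simp
      linarith [hr2]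
    have h5 := hABle (A/r) (Bv/r) h1
    have h6 : r ≤ A := by
      have : A/r * A + Bv/r * Bv = r := by
        field_simp
        nlinarith [hr2]
      linarith [h5, this]
    have h7 : r^2 ≤ A^2 := pow_le_pow_left₀ hr.le h6 2
    have h8 : 0 < Bv^2 := by positivity
    linarith
  have hMsym : Mᵀ = M := by
    ext a b
    rw [Matrix.transpose_apply]
    by_cases h : b = a
    · rw [h]
    · exact (key b a h).symm
  obtain ⟨Q₀, e, hQ₀, hMdec⟩ := spectral_real M hMsym
  have hQ₀Q₀ : Q₀ * Q₀ᵀ = 1 := mul_eq_one_comm.mp hQ₀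
  have htraceM : trace M = ∑ k, e k := by
    rw [hMdec, Matrix.trace_mul_cycle, hQ₀, Matrix.one_mul, Matrix.trace_diagonal]
  -- conjugation helper
  have conj_mul : ∀ D E : Matrix (Fin d) (Fin d) ℝ,
      (Q₀ * D * Q₀ᵀ) * (Q₀ * E * Q₀ᵀ) = Q₀ * (D * E) * Q₀ᵀ := by
    intro D E
    simp only [Matrix.mul_assoc]
    rw [← Matrix.mul_assoc Q₀ᵀ Q₀ (E * Q₀ᵀ), hQ₀, Matrix.one_mul]
  have conj_transpose : ∀ g : Fin d → ℝ,
      (Q₀ * Matrix.diagonal g * Q₀ᵀ)ᵀ = Q₀ * Matrix.diagonal g * Q₀ᵀ := by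
    intro g
    simp only [Matrix.transpose_mul, Matrix.transpose_transpose, Matrix.diagonal_transpose,
      Matrix.mul_assoc]
  have conj_trace : ∀ g : Fin d → ℝ, trace (Q₀ * Matrix.diagonal g * Q₀ᵀ) = ∑ k, g k := by
    intro g
    rw [Matrix.trace_mul_cycle, hQ₀, Matrix.one_mul, Matrix.trace_diagonal]
  -- eigenvalues nonneg
  set f : Fin d → ℝ := fun k => if e k < 0 then -1 else 1 with hfdef
  have hff : ∀ k, f k * f k = 1 := by
    intro k; by_cases h : e k < 0 <;> simp [hfdef, h]
  have hQf : (Q₀ * Matrix.diagonal f * Q₀ᵀ)ᵀ * (Q₀ * Matrix.diagonal f * Q₀ᵀ) = 1 := by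
    rw [conj_transpose, conj_mul, Matrix.diagonal_mul_diagonal]
    have : (fun k => f k * f k) = fun _ => (1:ℝ) := funext hff
    rw [this, Matrix.diagonal_one, Matrix.mul_one, hQ₀Q₀]
  have htrf : trace ((Q₀ * Matrix.diagonal f * Q₀ᵀ) * M) = ∑ k, f k * e k := by
    rw [hMdec, conj_mul, Matrix.diagonal_mul_diagonal, conj_trace]
  have h3 := hP _ hQf
  rw [htrf, htraceM] at h3
  have heNonneg : ∀ k, 0 ≤ e k := by
    intro k
    by_contra hk
    push_neg at hk
    have hterm : ∀ l, e l ≤ f l * e l := by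
      intro l
      by_cases h : e l < 0 <;> simp [hfdef, h] <;> nlinarith
    have hstrict : e k < f k * e k := by
      simp only [hfdef, if_pos hk]
      nlinarith
    have := Finset.sum_lt_sum (fun l _ => hterm l) ⟨k, Finset.mem_univ k, hstrict⟩
    linarith
  -- M * M = Sᵀ * S
  have hMM : M * M = Sᵀ * S := by
    calc M * M = Mᵀ * M := by rw [hMsym]
      _ = Sᵀ * (R₀ * R₀ᵀ) * S := by
          rw [hMdef, Matrix.transpose_mul, Matrix.transpose_transpose]
          simp only [Matrix.mul_assoc]
      _ = Sᵀ * S := by rw [hR₀R₀, Matrix.mul_one]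
  have hdiagsq : Sᵀ * S = Q₀ * Matrix.diagonal (fun k => e k * e k) * Q₀ᵀ := by
    rw [← hMM, hMdec, conj_mul, Matrix.diagonal_mul_diagonal]
  have htrSS : trace (Sᵀ * S) = ∑ k, e k * e k := by
    rw [hdiagsq, conj_trace]
  -- eigenvalues at most 1
  have hdiag2 : Matrix.diagonal (fun k => e k * e k) = 1 - (B * Q₀)ᵀ * (B * Q₀) := by
    have h1 : Q₀ᵀ * (Sᵀ * S) * Q₀ = Matrix.diagonal (fun k => e k * e k) := by
      rw [hdiagsq]
      calc Q₀ᵀ * (Q₀ * Matrix.diagonal (fun k => e k * e k) * Q₀ᵀ) * Q₀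
          = (Q₀ᵀ * Q₀) * Matrix.diagonal (fun k => e k * e k) * (Q₀ᵀ * Q₀) := by
            simp only [Matrix.mul_assoc]
        _ = Matrix.diagonal (fun k => e k * e k) := by
            rw [hQ₀, Matrix.one_mul, Matrix.mul_one]
    have h2 : Sᵀ * S = 1 - Bᵀ * B := by
      rw [← hB, add_sub_cancel_right]
    rw [← h1, h2]
    rw [Matrix.mul_sub, Matrix.sub_mul, Matrix.mul_one, hQ₀]
    congr 1
    rw [Matrix.transpose_mul]
    simp only [Matrix.mul_assoc]
  have hBB : ∀ k, e k * e k ≤ 1 := by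
    intro k
    have h1 := congrFun (congrFun hdiag2 k) k
    have h2 : ((B * Q₀)ᵀ * (B * Q₀)) k k = ∑ l, (B * Q₀) l k * (B * Q₀) l k := by
      rw [Matrix.mul_apply]
      exact Finset.sum_congr rfl fun l _ => by rw [Matrix.transpose_apply]
    have h3 : (0:ℝ) ≤ ∑ l, (B * Q₀) l k * (B * Q₀) l k :=
      Finset.sum_nonneg fun l _ => mul_self_nonneg _
    simp only [Matrix.diagonal_apply_eq, Matrix.sub_apply, Matrix.one_apply_eq] at h1
    rw [h2] at h1
    linarith
  have hee : ∀ k, e k * e k ≤ e k := by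
    intro k
    nlinarith [heNonneg k, hBB k]
  refine ⟨R₀, hR₀, ?_⟩
  rw [htrSS, ← hMdef, htraceM]
  exact Finset.sum_le_sum fun k _ => hee k

end DKAux

/-- Davis–Kahan `sin Θ` theorem (Frobenius version).  `H` and `H'` are symmetric `n × n`
matrices with spectral decompositions `H = W diag(μ) Wᵀ + U diag(ν) Uᵀ` and
`H' = W' diag(μ') W'ᵀ + U' diag(ν') U'ᵀ`, where `[W U]` and `[W' U']` are orthogonal,
the columns of `W` (resp. `W'`) span the sum of eigenspaces of `H` (resp. `H'`) for the
eigenvalues `μ` (resp. `μ'`) lying in the interval `V`, while `ν`, `ν'` lie outside `V`.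
If `δ > 0` is a lower bound on the distance between any eigenvalue of `H` in `V` and any
eigenvalue of `H'` outside `V`, then there is an orthogonal `d × d` matrix `R` with
`‖W R - W'‖_F ≤ √2 ‖H - H'‖_F / δ`. -/

theorem davis_kahan_sin_theta
    (n d : ℕ) (hd : d ≤ n)
    (H H' : Matrix (Fin n) (Fin n) ℝ)
    (V : Set ℝ) (hV : V.OrdConnected)
    (W W' : Matrix (Fin n) (Fin d) ℝ)
    (U U' : Matrix (Fin n) (Fin (n - d)) ℝ)
    (μ μ' : Fin d → ℝ) (ν ν' : Fin (n - d) → ℝ)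
    (hWo : Wᵀ * W = 1) (hUo : Uᵀ * U = 1) (hWU : Wᵀ * U = 0)
    (hcomplete : W * Wᵀ + U * Uᵀ = 1)
    (hWo' : W'ᵀ * W' = 1) (hUo' : U'ᵀ * U' = 1) (hWU' : W'ᵀ * U' = 0)
    (hcomplete' : W' * W'ᵀ + U' * U'ᵀ = 1)
    (hH : H = W * Matrix.diagonal μ * Wᵀ + U * Matrix.diagonal ν * Uᵀ)
    (hH' : H' = W' * Matrix.diagonal μ' * W'ᵀ + U' * Matrix.diagonal ν' * U'ᵀ)
    (hμ : ∀ a, μ a ∈ V) (hν : ∀ b, ν b ∉ V)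
    (hμ' : ∀ a, μ' a ∈ V) (hν' : ∀ b, ν' b ∉ V)
    (δ : ℝ) (hδ : 0 < δ) (hgap : ∀ a b, δ ≤ |μ a - ν' b|) :
    ∃ R : Matrix (Fin d) (Fin d) ℝ, Rᵀ * R = 1 ∧
      frobNorm' (W * R - W') ≤ Real.sqrt 2 * frobNorm' (H - H') / δ := by
  classical
  have hU'W' : U'ᵀ * W' = 0 := by
    have h := congrArg Matrix.transpose hWU'
    simpa using h
  have hUW : Uᵀ * W = 0 := by
    have h := congrArg Matrix.transpose hWU
    simpa using h
  set S : Matrix (Fin d) (Fin d) ℝ := W'ᵀ * W with hSdef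
  set Bm : Matrix (Fin (n-d)) (Fin d) ℝ := U'ᵀ * W with hBdef
  have hSB : Sᵀ * S + Bmᵀ * Bm = 1 := by
    have h1 : Sᵀ * S + Bmᵀ * Bm = Wᵀ * ((W' * W'ᵀ + U' * U'ᵀ) * W) := by
      rw [hSdef, hBdef]
      simp only [Matrix.transpose_mul, Matrix.transpose_transpose, Matrix.add_mul,
        Matrix.mul_add, Matrix.mul_assoc]
    rw [h1, hcomplete', Matrix.one_mul, hWo]
  obtain ⟨R₁, hR₁, htr⟩ := DKAux.exists_rot S Bm hSB
  have hR₁R₁ : R₁ * R₁ᵀ = 1 := mul_eq_one_comm.mp hR₁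
  refine ⟨R₁ᵀ, by rw [Matrix.transpose_transpose]; exact hR₁R₁, ?_⟩
  -- expansion
  have hWR : (W * R₁ᵀ)ᵀ * (W * R₁ᵀ) = 1 := by
    rw [Matrix.transpose_mul, Matrix.transpose_transpose]
    calc R₁ * Wᵀ * (W * R₁ᵀ) = R₁ * ((Wᵀ * W) * R₁ᵀ) := by simp only [Matrix.mul_assoc]
      _ = 1 := by rw [hWo, Matrix.one_mul, hR₁R₁]
  have e1 : trace ((W * R₁ᵀ)ᵀ * (W * R₁ᵀ)) = trace (1 : Matrix (Fin d) (Fin d) ℝ) := by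
    rw [hWR]
  have e2 : trace ((W * R₁ᵀ)ᵀ * W') = trace (R₁ᵀ * S) := by
    have h1 : (W * R₁ᵀ)ᵀ * W' = R₁ * (Wᵀ * W') := by
      rw [Matrix.transpose_mul, Matrix.transpose_transpose, Matrix.mul_assoc]
    have h2 : Wᵀ * W' = Sᵀ := by
      rw [hSdef, Matrix.transpose_mul, Matrix.transpose_transpose]
    rw [h1, h2, ← Matrix.trace_transpose, Matrix.transpose_mul, Matrix.transpose_transpose,
      Matrix.trace_mul_comm]
  have e3 : trace (W'ᵀ * (W * R₁ᵀ)) = trace (R₁ᵀ * S) := by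
    rw [← Matrix.mul_assoc, show W'ᵀ * W = S from hSdef.symm, Matrix.trace_mul_comm]
  have e4 : trace (W'ᵀ * W') = trace (1 : Matrix (Fin d) (Fin d) ℝ) := by rw [hWo']
  have hexp : DKAux.fsq (W * R₁ᵀ - W') = trace (1 : Matrix (Fin d) (Fin d) ℝ)
      + trace (1 : Matrix (Fin d) (Fin d) ℝ) - 2 * trace (R₁ᵀ * S) := by
    rw [DKAux.fsq_eq_trace]
    rw [Matrix.transpose_sub, Matrix.sub_mul, Matrix.mul_sub, Matrix.mul_sub]
    simp only [Matrix.trace_sub]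
    rw [e1, e2, e3, e4]
    ring
  have htrace1 : trace (Sᵀ * S) + trace (Bmᵀ * Bm) = trace (1 : Matrix (Fin d) (Fin d) ℝ) := by
    rw [← Matrix.trace_add, hSB]
  have hfb : DKAux.fsq Bm = trace (Bmᵀ * Bm) := DKAux.fsq_eq_trace Bm
  have h2B : DKAux.fsq (W * R₁ᵀ - W') ≤ 2 * DKAux.fsq Bm := by
    rw [hexp, hfb]
    linarith [htr, htrace1]
  -- gap bound
  have hU'H' : U'ᵀ * H' = Matrix.diagonal ν' * U'ᵀ := by
    rw [hH']
    simp only [Matrix.mul_add, ← Matrix.mul_assoc, hU'W', hUo', Matrix.zero_mul,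
      Matrix.one_mul, zero_add]
  have hHW : H * W = W * Matrix.diagonal μ := by
    rw [hH]
    simp only [Matrix.add_mul, Matrix.mul_assoc, hUW, hWo, Matrix.mul_one, Matrix.mul_zero,
      add_zero]
  have hDB : U'ᵀ * (H' - H) * W = Matrix.diagonal ν' * Bm - Bm * Matrix.diagonal μ := by
    rw [Matrix.mul_sub, Matrix.sub_mul]
    congr 1
    · rw [hU'H', Matrix.mul_assoc, show U'ᵀ * W = Bm from hBdef.symm]
    · rw [Matrix.mul_assoc, hHW, ← Matrix.mul_assoc, show U'ᵀ * W = Bm from hBdef.symm]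
  have hgapB : δ^2 * DKAux.fsq Bm ≤ DKAux.fsq (U'ᵀ * (H' - H) * W) := by
    rw [hDB]
    unfold DKAux.fsq
    rw [Finset.mul_sum]
    refine Finset.sum_le_sum fun b _ => ?_
    rw [Finset.mul_sum]
    refine Finset.sum_le_sum fun a _ => ?_
    have hab : δ^2 ≤ (μ a - ν' b)^2 := by
      calc δ^2 ≤ |μ a - ν' b|^2 := pow_le_pow_left₀ hδ.le (hgap a b) 2
        _ = (μ a - ν' b)^2 := sq_abs _
    have hentry : (Matrix.diagonal ν' * Bm - Bm * Matrix.diagonal μ) b a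
        = (ν' b - μ a) * Bm b a := by
      rw [Matrix.sub_apply, Matrix.diagonal_mul, Matrix.mul_diagonal]
      ring
    rw [hentry]
    have hsq := sq_nonneg (Bm b a)
    calc δ^2 * Bm b a ^ 2 ≤ (μ a - ν' b)^2 * Bm b a ^ 2 := by nlinarith
      _ = ((ν' b - μ a) * Bm b a)^2 := by ring
  have hsmall : DKAux.fsq (U'ᵀ * (H' - H) * W) ≤ DKAux.fsq (H - H') := by
    calc DKAux.fsq (U'ᵀ * (H' - H) * W) ≤ DKAux.fsq (U'ᵀ * (H' - H)) :=
          DKAux.fsq_right_le W U hcomplete _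
      _ ≤ DKAux.fsq (H' - H) := DKAux.fsq_left_le W' U' hcomplete' _
      _ = DKAux.fsq (H - H') := DKAux.fsq_sub_comm _ _
  have hδ2 : (0:ℝ) < δ^2 := by positivity
  have hfinal : DKAux.fsq (W * R₁ᵀ - W') ≤ 2 * DKAux.fsq (H - H') / δ^2 := by
    rw [le_div_iff₀ hδ2]
    calc DKAux.fsq (W * R₁ᵀ - W') * δ^2 ≤ (2 * DKAux.fsq Bm) * δ^2 :=
          mul_le_mul_of_nonneg_right h2B hδ2.le
      _ = 2 * (δ^2 * DKAux.fsq Bm) := by ring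
      _ ≤ 2 * DKAux.fsq (U'ᵀ * (H' - H) * W) := by linarith [hgapB]
      _ ≤ 2 * DKAux.fsq (H - H') := by linarith [hsmall]
  have hFnn := DKAux.fsq_nonneg (H - H')
  have hfrob1 : frobNorm' (W * R₁ᵀ - W') = Real.sqrt (DKAux.fsq (W * R₁ᵀ - W')) := rfl
  have hfrob2 : frobNorm' (H - H') = Real.sqrt (DKAux.fsq (H - H')) := rfl
  rw [hfrob1, hfrob2]
  have hrhs : Real.sqrt 2 * Real.sqrt (DKAux.fsq (H - H')) / δ
      = Real.sqrt (2 * DKAux.fsq (H - H') / δ^2) := by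
    have h1 : 2 * DKAux.fsq (H - H') / δ^2
        = (Real.sqrt 2 * Real.sqrt (DKAux.fsq (H - H')) / δ)^2 := by
      rw [div_pow, mul_pow, Real.sq_sqrt (by norm_num : (0:ℝ) ≤ 2), Real.sq_sqrt hFnn]
    rw [h1, Real.sqrt_sq (by positivity)]
  rw [hrhs]
  exact Real.sqrt_le_sqrt hfinal
end
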